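/- arXiv:2101.12617 — 5 statements merged into one kernel-verified Lean document; each statement's English description precedes it below -/
import Mathlib

section
/- Let g : ℝ^d → ℝ be a convex, continuously differentiable function whose gradient is L-Lipschitz, let P ⊆ ℝ^d be a compact convex set with diameter D, let x̂ ∈ P, let s ∈ P minimize ⟨∇g(x̂), ·⟩ over P, and set gap = ⟨∇g(x̂), x̂ - s⟩ and c = g(x̂) - inf_{x∈P} g(x). Then c ≤ gap, and moreover gap ≤ c + L·D²/2 if c > L·D²/2, while gap ≤ D·√(2·L·c) if c ≤ L·D²/2. -/
open scoped RealInnerProductSpace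

section aux

variable {E : Type*} [NormedAddCommGroup E] [InnerProductSpace ℝ E] [CompleteSpace E]

lemma aux_deriv (g : E → ℝ) (g' : E → E) (hgrad : ∀ x, HasGradientAt g (g' x) x)
    (x y : E) (t : ℝ) :
    HasDerivAt (fun t : ℝ => g (x + t • (y - x))) ⟪g' (x + t • (y - x)), y - x⟫ t := by
  have hc : HasDerivAt (fun t : ℝ => x + t • (y - x)) (y - x) t := by
    simpa using ((hasDerivAt_id t).smul_const (y - x)).const_add x
  have hf := (hasGradientAt_iff_hasFDerivAt.mp (hgrad (x + t • (y - x))))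
  have h2 := hf.comp_hasDerivAt t hc
  simp at h2
  exact h2

lemma aux_convex (g : E → ℝ) (g' : E → E) (hconv : ConvexOn ℝ Set.univ g)
    (hgrad : ∀ x, HasGradientAt g (g' x) x) (x y : E) :
    g x + ⟪g' x, y - x⟫ ≤ g y := by
  have hφ : ConvexOn ℝ Set.univ (fun t : ℝ => g (x + t • (y - x))) := by
    have h := hconv.comp_affineMap (AffineMap.lineMap x y)
    have heq : (g ∘ (AffineMap.lineMap x y) : ℝ → ℝ) = fun t : ℝ => g (x + t • (y - x)) := by
      funext t; simp [AffineMap.lineMap_apply, add_comm]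
    simpa [heq] using h
  have hd := aux_deriv g g' hgrad x y 0
  have hs := hφ.le_slope_of_hasDerivAt (Set.mem_univ (0:ℝ)) (Set.mem_univ (1:ℝ)) one_pos
    (by simpa using hd)
  simp [slope] at hs
  linarith

lemma aux_descent (g : E → ℝ) (g' : E → E) (L : ℝ) (hL : 0 ≤ L)
    (hgrad : ∀ x, HasGradientAt g (g' x) x)
    (hlip : ∀ x y, ‖g' x - g' y‖ ≤ L * ‖x - y‖) (x y : E) :
    g y ≤ g x + ⟪g' x, y - x⟫ + L / 2 * ‖y - x‖ ^ 2 := by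
  set ψ : ℝ → ℝ := fun t => ⟪g' (x + t • (y - x)), y - x⟫ with hψ
  have hg'cont : Continuous g' := by
    refine (LipschitzWith.of_dist_le_mul (K := L.toNNReal) ?_).continuous
    intro a b
    rw [dist_eq_norm, dist_eq_norm, Real.coe_toNNReal L hL]
    exact hlip a b
  have hψcont : Continuous ψ := by
    apply Continuous.inner
    · exact hg'cont.comp (by continuity)
    · exact continuous_const
  have hint : IntervalIntegrable ψ MeasureTheory.volume 0 1 :=
    hψcont.intervalIntegrable 0 1
  have hftc : ∫ t in (0:ℝ)..1, ψ t = g (x + (1:ℝ) • (y - x)) - g (x + (0:ℝ) • (y - x)) :=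
    intervalIntegral.integral_eq_sub_of_hasDerivAt
      (fun t _ => aux_deriv g g' hgrad x y t) hint
  have hbound : ∀ t ∈ Set.Icc (0:ℝ) 1, ψ t ≤ ψ 0 + (L * ‖y - x‖ ^ 2) * t := by
    intro t ht
    have h1 : ψ t - ψ 0 = ⟪g' (x + t • (y - x)) - g' (x + (0:ℝ) • (y - x)), y - x⟫ := by
      simp [hψ, inner_sub_left]
    have h2 : ψ t - ψ 0 ≤ ‖g' (x + t • (y - x)) - g' (x + (0:ℝ) • (y - x))‖ * ‖y - x‖ := by
      rw [h1]; exact real_inner_le_norm _ _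
    have h3 : ‖g' (x + t • (y - x)) - g' (x + (0:ℝ) • (y - x))‖ ≤ L * (t * ‖y - x‖) := by
      refine (hlip _ _).trans ?_
      have h4 : (x + t • (y - x)) - (x + (0:ℝ) • (y - x)) = t • (y - x) := by
        simp
      rw [h4, norm_smul]
      simp [abs_of_nonneg ht.1]
    nlinarith [norm_nonneg (y - x), hL, ht.1]
  have i1 : IntervalIntegrable (fun _ : ℝ => ψ 0) MeasureTheory.volume 0 1 :=
    intervalIntegrable_const
  have i2 : IntervalIntegrable (fun t : ℝ => (L * ‖y - x‖ ^ 2) * t) MeasureTheory.volume 0 1 :=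
    (continuous_const.mul continuous_id').intervalIntegrable 0 1
  have hmono : ∫ t in (0:ℝ)..1, ψ t ≤ ∫ t in (0:ℝ)..1, (ψ 0 + (L * ‖y - x‖ ^ 2) * t) :=
    intervalIntegral.integral_mono_on zero_le_one hint (i1.add i2) hbound
  have hval : ∫ t in (0:ℝ)..1, (ψ 0 + (L * ‖y - x‖ ^ 2) * t) = ψ 0 + (L * ‖y - x‖ ^ 2) / 2 := by
    rw [intervalIntegral.integral_add i1 i2, intervalIntegral.integral_const_mul, integral_id]
    simp
    ring
  have hψ0 : ψ 0 = ⟪g' x, y - x⟫ := by simp [hψ]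
  rw [hval, hψ0, hftc] at hmono
  simp at hmono
  linarith

end aux

theorem stmt_0 {d : ℕ} (g : EuclideanSpace ℝ (Fin d) → ℝ)
    (g' : EuclideanSpace ℝ (Fin d) → EuclideanSpace ℝ (Fin d))
    (L : ℝ) (hL : 0 < L)
    (hconv : ConvexOn ℝ Set.univ g)
    (hgrad : ∀ x, HasGradientAt g (g' x) x)
    (hlip : ∀ x y, ‖g' x - g' y‖ ≤ L * ‖x - y‖)
    (P : Set (EuclideanSpace ℝ (Fin d)))
    (hPcomp : IsCompact P) (hPconv : Convex ℝ P) (hPne : P.Nonempty)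
    (D : ℝ) (hD : D = Metric.diam P)
    (xh : EuclideanSpace ℝ (Fin d)) (hxh : xh ∈ P)
    (s : EuclideanSpace ℝ (Fin d)) (hs : s ∈ P)
    (hlmo : ∀ x ∈ P, ⟪g' xh, s⟫ ≤ ⟪g' xh, x⟫)
    (gap c : ℝ) (hgap : gap = ⟪g' xh, xh - s⟫)
    (hc : c = g xh - sInf (g '' P)) :
    c ≤ gap ∧
    (L * D ^ 2 / 2 < c → gap ≤ c + L * D ^ 2 / 2) ∧
    (c ≤ L * D ^ 2 / 2 → gap ≤ D * Real.sqrt (2 * L * c)) := by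
  have hL0 : 0 ≤ L := hL.le
  have hgcont : Continuous g :=
    continuous_iff_continuousAt.mpr fun x => (hgrad x).differentiableAt.continuousAt
  have hbdd : BddBelow (g '' P) := (hPcomp.image hgcont).bddBelow
  have himne : (g '' P).Nonempty := hPne.image g
  have hDnn : 0 ≤ D := by rw [hD]; exact Metric.diam_nonneg
  have hdist : ‖s - xh‖ ≤ D := by
    rw [hD]
    simpa [dist_eq_norm] using Metric.dist_le_diam_of_mem hPcomp.isBounded hs hxh
  have hc0 : 0 ≤ c := by
    have := csInf_le hbdd ⟨xh, hxh, rfl⟩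
    rw [hc]; linarith
  -- Part 1 : c ≤ gap
  have part1 : c ≤ gap := by
    have hlb : ∀ b ∈ g '' P, g xh - gap ≤ b := by
      rintro b ⟨z, hz, rfl⟩
      have hcv := aux_convex g g' hconv hgrad xh z
      have hlin : ⟪g' xh, s⟫ ≤ ⟪g' xh, z⟫ := hlmo z hz
      have e1 : ⟪g' xh, z - xh⟫ = ⟪g' xh, z⟫ - ⟪g' xh, xh⟫ := inner_sub_right _ _ _
      have e2 : gap = ⟪g' xh, xh⟫ - ⟪g' xh, s⟫ := by rw [hgap]; exact inner_sub_right _ _ _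
      linarith
    have := le_csInf himne hlb
    rw [hc]; linarith
  -- Key inequality : ∀ γ ∈ [0,1], γ·gap - γ²·L·D²/2 ≤ c
  have key : ∀ γ : ℝ, 0 ≤ γ → γ ≤ 1 → γ * gap - γ ^ 2 * (L * D ^ 2) / 2 ≤ c := by
    intro γ hγ0 hγ1
    set y := xh + γ • (s - xh) with hy
    have hyP : y ∈ P := by
      have hmem := hPconv hxh hs (by linarith : (0:ℝ) ≤ 1 - γ) hγ0 (by ring)
      have heq : (1 - γ) • xh + γ • s = y := by rw [hy]; module
      rwa [heq] at hmem
    have hdesc := aux_descent g g' L hL0 hgrad hlip xh y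
    have hyx : y - xh = γ • (s - xh) := by rw [hy]; abel
    have hin : ⟪g' xh, y - xh⟫ = -(γ * gap) := by
      rw [hyx, real_inner_smul_right, hgap]
      have hneg : ⟪g' xh, s - xh⟫ = -⟪g' xh, xh - s⟫ := by
        rw [← inner_neg_right]; congr 1; abel
      rw [hneg]; ring
    have hnorm : ‖y - xh‖ = γ * ‖s - xh‖ := by
      rw [hyx, norm_smul, Real.norm_eq_abs, abs_of_nonneg hγ0]
    have hsinf : sInf (g '' P) ≤ g y := csInf_le hbdd ⟨y, hyP, rfl⟩
    have hn2 : ‖y - xh‖ ^ 2 ≤ γ ^ 2 * D ^ 2 := by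
      rw [hnorm]
      have h1 : γ * ‖s - xh‖ ≤ γ * D := mul_le_mul_of_nonneg_left hdist hγ0
      nlinarith [norm_nonneg (s - xh), mul_nonneg hγ0 (norm_nonneg (s - xh))]
    rw [hin] at hdesc
    rw [hc]
    nlinarith [hdesc, hsinf, hn2, hL0]
  -- Part 2
  have part2 : gap ≤ c + L * D ^ 2 / 2 := by
    have := key 1 zero_le_one le_rfl
    linarith
  refine ⟨part1, fun _ => part2, fun hcle => ?_⟩
  -- Part 3
  rcases le_or_gt gap 0 with hg0 | hgpos
  · have : 0 ≤ D * Real.sqrt (2 * L * c) :=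
      mul_nonneg hDnn (Real.sqrt_nonneg _)
    linarith
  · have hDpos : 0 < D := by
      rcases hDnn.lt_or_eq with h | h
      · exact h
      · exfalso
        have hsx : s = xh := by
          have h1 : ‖s - xh‖ ≤ 0 := by rw [← h] at hdist; exact hdist
          have h2 : ‖s - xh‖ = 0 := le_antisymm h1 (norm_nonneg _)
          rwa [norm_sub_eq_zero_iff] at h2
        rw [hgap, hsx] at hgpos
        simp at hgpos
    rcases le_or_gt gap (L * D ^ 2) with hgle | hggt
    · have hLD2 : 0 < L * D ^ 2 := by positivity
      set γ := gap / (L * D ^ 2) with hγ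
      have hγ0 : 0 ≤ γ := by positivity
      have hγ1 : γ ≤ 1 := by rw [hγ, div_le_one hLD2]; exact hgle
      have hk := key γ hγ0 hγ1
      have hγval : γ * gap - γ ^ 2 * (L * D ^ 2) / 2 = gap ^ 2 / (2 * (L * D ^ 2)) := by
        rw [hγ]
        field_simp
        ring
      rw [hγval] at hk
      have hsq : gap ^ 2 ≤ D ^ 2 * (2 * L * c) := by
        have := (div_le_iff₀ (by positivity : (0:ℝ) < 2 * (L * D ^ 2))).mp hk
        nlinarith
      have h := Real.sqrt_le_sqrt hsq
      rw [Real.sqrt_sq hgpos.le] at h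
      rwa [Real.sqrt_mul (sq_nonneg D), Real.sqrt_sq hDnn] at h
    · exfalso
      linarith
end

section
/- Let (a_n) be a nonnegative real sequence satisfying a_n² ≤ S_n + Σ_{k=1}^n λ_k a_k for all n ≥ 1, where (S_n) is a nondecreasing sequence with S_0 ≥ a_0², and λ_k ≥ 0 for all k. Then for all n, a_n ≤ A_n + √(S_n + A_n²), where A_n = (1/2) Σ_{k=1}^n λ_k. -/
open Finset in
theorem stmt_2 (a S lam : ℕ → ℝ)
    (ha : ∀ n, 0 ≤ a n) (hlam : ∀ k, 0 ≤ lam k)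
    (hS : Monotone S) (hS0 : a 0 ^ 2 ≤ S 0)
    (hrec : ∀ n ≥ 1, a n ^ 2 ≤ S n + ∑ k ∈ Finset.Icc 1 n, lam k * a k) :
    ∀ n, a n ≤ (1 / 2) * ∑ k ∈ Finset.Icc 1 n, lam k +
      Real.sqrt (S n + ((1 / 2) * ∑ k ∈ Finset.Icc 1 n, lam k) ^ 2) := by
  intro n
  set A : ℝ := (1 / 2) * ∑ k ∈ Finset.Icc 1 n, lam k with hAdef
  have hAnn : 0 ≤ A := by
    have : 0 ≤ ∑ k ∈ Finset.Icc 1 n, lam k :=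
      Finset.sum_nonneg fun k _ => hlam k
    rw [hAdef]; linarith
  have hSn : (0:ℝ) ≤ S n :=
    le_trans (le_trans (sq_nonneg (a 0)) hS0) (hS (Nat.zero_le n))
  obtain ⟨k0, hk0mem, hk0⟩ := Finset.exists_max_image (Finset.range (n+1)) a
    ⟨0, Finset.mem_range.mpr (Nat.succ_pos n)⟩
  set M : ℝ := a k0 with hMdef
  have hMnn : 0 ≤ M := ha k0
  have hM : ∀ j ≤ n, a j ≤ M := fun j hj =>
    hk0 j (Finset.mem_range.mpr (Nat.lt_succ_of_le hj))
  have hk0n : k0 ≤ n := Nat.lt_succ_iff.mp (Finset.mem_range.mp hk0mem)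
  have key : M ^ 2 ≤ S n + 2 * A * M := by
    rcases Nat.eq_zero_or_pos k0 with h0 | h1
    · have : M ^ 2 ≤ S 0 := by rw [hMdef, h0]; exact hS0
      nlinarith [hS (Nat.zero_le n)]
    · have hrk := hrec k0 h1
      have hs1 : ∑ k ∈ Finset.Icc 1 k0, lam k * a k ≤ ∑ k ∈ Finset.Icc 1 k0, lam k * M := by
        apply Finset.sum_le_sum
        intro i hi
        exact mul_le_mul_of_nonneg_left
          (hM i (le_trans (Finset.mem_Icc.mp hi).2 hk0n)) (hlam i)
      have hs2 : ∑ k ∈ Finset.Icc 1 k0, lam k * M ≤ ∑ k ∈ Finset.Icc 1 n, lam k * M := by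
        apply Finset.sum_le_sum_of_subset_of_nonneg (Finset.Icc_subset_Icc_right hk0n)
        intro i _ _; exact mul_nonneg (hlam i) hMnn
      have hs3 : ∑ k ∈ Finset.Icc 1 n, lam k * M = 2 * A * M := by
        rw [hAdef, ← Finset.sum_mul]; ring
      have hSk : S k0 ≤ S n := hS hk0n
      calc M ^ 2 ≤ S k0 + ∑ k ∈ Finset.Icc 1 k0, lam k * a k := hrk
        _ ≤ S n + 2 * A * M := by rw [← hs3]; linarith
  have hrad : 0 ≤ S n + A ^ 2 := by positivity
  have hMle : M ≤ A + Real.sqrt (S n + A ^ 2) := by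
    rcases le_or_gt M A with h | h
    · exact le_trans h (le_add_of_nonneg_right (Real.sqrt_nonneg _))
    · have h1 : (M - A) ^ 2 ≤ S n + A ^ 2 := by nlinarith
      have h2 : M - A ≤ Real.sqrt (S n + A ^ 2) := by
        have := Real.sqrt_le_sqrt h1
        rwa [Real.sqrt_sq (by linarith : 0 ≤ M - A)] at this
      linarith
  exact le_trans (hM n le_rfl) hMle
end

section
/- Let φ : ℝ^m → ℝ ∪ {+∞} be a proper convex lower semicontinuous function, γ > 0, ε ≥ 0, and let ŷ satisfy φ(ŷ) + (1/(2γ))‖ŷ - ȳ‖² ≤ inf_y [φ(y) + (1/(2γ))‖y - ȳ‖²] + ε (i.e., ŷ is an ε-approximate proximal point of φ at ȳ). Then there exists a vector r with ‖r‖ ≤ √(2γε) such that for all z: φ(z) ≥ φ(ŷ) + ⟨(ȳ - ŷ - r)/γ, z - ŷ⟩ - ε. -/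
open scoped RealInnerProductSpace

lemma combo_norm_sq {F : Type*} [NormedAddCommGroup F] [InnerProductSpace ℝ F]
    (t : ℝ) (u v w : F) :
    ‖((1-t) • u + t • v) - w‖^2
      = (1-t) * ‖u - w‖^2 + t * ‖v - w‖^2 - t * (1-t) * ‖u - v‖^2 := by
  have h1 : ((1-t) • u + t • v) - w = (1-t) • (u - w) + t • (v - w) := by module
  have h2 : u - v = (u - w) - (v - w) := by abel
  rw [h1, h2]
  simp only [← real_inner_self_eq_norm_sq, inner_add_left, inner_add_right,
    inner_sub_left, inner_sub_right, real_inner_smul_left, real_inner_smul_right]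
  rw [real_inner_comm w u, real_inner_comm w v, real_inner_comm v u]
  ring

lemma three_point {F : Type*} [NormedAddCommGroup F] [InnerProductSpace ℝ F]
    (z p w : F) :
    ‖z - w‖^2 - ‖p - w‖^2 - ‖z - p‖^2 = 2 * ⟪z - p, p - w⟫ := by
  have h2 : z - p = (z - w) - (p - w) := by abel
  rw [h2]
  simp only [← real_inner_self_eq_norm_sq, inner_sub_left, inner_sub_right]
  rw [real_inner_comm w z, real_inner_comm w p, real_inner_comm p z]
  ring

theorem stmt_3 {m : ℕ} (φ : EuclideanSpace ℝ (Fin m) → EReal)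
    (hne_bot : ∀ y, φ y ≠ ⊥) (hne_top : ∃ y, φ y ≠ ⊤)
    (hconv : Convex ℝ {p : EuclideanSpace ℝ (Fin m) × ℝ | φ p.1 ≤ (p.2 : EReal)})
    (hlsc : LowerSemicontinuous φ)
    (γ ε : ℝ) (hγ : 0 < γ) (hε : 0 ≤ ε)
    (ybar yh : EuclideanSpace ℝ (Fin m))
    (hprox : ∀ y, φ yh + ((1 / (2 * γ) * ‖yh - ybar‖ ^ 2 : ℝ) : EReal) ≤
        φ y + ((1 / (2 * γ) * ‖y - ybar‖ ^ 2 : ℝ) : EReal) + (ε : EReal)) :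
    ∃ r : EuclideanSpace ℝ (Fin m), ‖r‖ ≤ Real.sqrt (2 * γ * ε) ∧
      ∀ z, φ yh + ((⟪γ⁻¹ • (ybar - yh - r), z - yh⟫ - ε : ℝ) : EReal) ≤ φ z := by
  classical
  set q : EuclideanSpace ℝ (Fin m) → ℝ := fun y => 1 / (2 * γ) * ‖y - ybar‖ ^ 2 with hqdef
  set ψ : EuclideanSpace ℝ (Fin m) → EReal := fun y => φ y + ((q y : ℝ) : EReal) with hψdef
  have real_of : ∀ y, φ y ≠ ⊤ → φ y = (((φ y).toReal : ℝ) : EReal) :=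
    fun y h => (EReal.coe_toReal h (hne_bot y)).symm
  have hψ_eq : ∀ w, φ w ≠ ⊤ → ψ w = (((φ w).toReal + q w : ℝ) : EReal) := by
    intro w h
    simp only [hψdef]
    rw [real_of w h]
    norm_cast
  have hntop_of : ∀ (w : EuclideanSpace ℝ (Fin m)) (c : EReal), c ≠ ⊤ → ψ w ≤ c → φ w ≠ ⊤ := by
    intro w c hc h htop
    simp only [hψdef, htop, EReal.top_add_coe, top_le_iff] at h
    exact hc h
  -- φ yh is finite
  obtain ⟨y0, hy0⟩ := hne_top
  have hψprox : ∀ y, ψ yh ≤ ψ y + (ε : EReal) := fun y => hprox y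
  have hyh_top : φ yh ≠ ⊤ := by
    refine hntop_of yh (ψ y0 + (ε : EReal)) ?_ (hψprox y0)
    rw [hψ_eq y0 hy0]
    intro h
    rw [show ((((φ y0).toReal + q y0 : ℝ)) : EReal) + (ε : EReal) = (((φ y0).toReal + q y0 + ε : ℝ) : EReal) by norm_cast] at h
    exact (EReal.coe_lt_top _).ne h
  set a := (φ yh).toReal with hadef
  -- real form of hprox
  have hprox' : ∀ y, φ y ≠ ⊤ → a + q yh ≤ (φ y).toReal + q y + ε := by
    intro y hy
    have h := hprox y
    rw [real_of yh hyh_top, real_of y hy] at h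
    norm_cast at h
  -- convexity in usable form
  have hA : ∀ (u v : EuclideanSpace ℝ (Fin m)) (t : ℝ), 0 ≤ t → t ≤ 1 → φ u ≠ ⊤ → φ v ≠ ⊤ →
      φ ((1-t) • u + t • v) ≤ (((1-t) * (φ u).toReal + t * (φ v).toReal : ℝ) : EReal) := by
    intro u v t ht0 ht1 hu hv
    have hu' : (u, (φ u).toReal) ∈ {p : EuclideanSpace ℝ (Fin m) × ℝ | φ p.1 ≤ (p.2 : EReal)} := by
      simp only [Set.mem_setOf_eq]
      exact (real_of u hu).le
    have hv' : (v, (φ v).toReal) ∈ {p : EuclideanSpace ℝ (Fin m) × ℝ | φ p.1 ≤ (p.2 : EReal)} := by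
      simp only [Set.mem_setOf_eq]
      exact (real_of v hv).le
    have := hconv hu' hv' (by linarith : (0:ℝ) ≤ 1 - t) ht0 (by ring)
    simpa [Prod.smul_mk, Prod.mk_add_mk, smul_eq_mul] using this
  -- ψ is lower semicontinuous
  have hqcont : Continuous q := by
    apply Continuous.mul continuous_const
    exact (continuous_id.sub continuous_const).norm.pow 2
  have hψlsc : LowerSemicontinuous ψ := by
    apply LowerSemicontinuous.add' hlsc
    · exact (continuous_coe_real_ereal.comp hqcont).lowerSemicontinuous
    · intro x
      apply EReal.continuousAt_add
      · exact Or.inr (EReal.coe_ne_bot _)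
      · exact Or.inl (hne_bot x)
  have hclosed : ∀ c : EReal, IsClosed {w | ψ w ≤ c} :=
    fun c => lowerSemicontinuous_iff_isClosed_preimage.1 hψlsc c
  -- the sublevel set K is compact
  set K : Set (EuclideanSpace ℝ (Fin m)) := {w | ψ w ≤ ψ yh} with hKdef
  have hKsub : K ⊆ Metric.closedBall yh (Real.sqrt (8 * γ * ε)) := by
    intro w hw
    have hψyh_ne : ψ yh ≠ ⊤ := by
      rw [hψ_eq yh hyh_top]; exact EReal.coe_ne_top _
    have hw_top : φ w ≠ ⊤ := hntop_of w (ψ yh) hψyh_ne hw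
    set bw := (φ w).toReal with hbwdef
    have h1 : bw + q w ≤ a + q yh := by
      have := hw
      rw [hKdef, Set.mem_setOf_eq, hψ_eq w hw_top, hψ_eq yh hyh_top] at this
      exact_mod_cast this
    set mid := (1 - (1/2 : ℝ)) • w + (1/2 : ℝ) • yh with hmiddef
    have hmid_le := hA w yh (1/2) (by norm_num) (by norm_num) hw_top hyh_top
    have hmid_top : φ mid ≠ ⊤ := (lt_of_le_of_lt hmid_le (EReal.coe_lt_top _)).ne
    have h3 : (φ mid).toReal ≤ (1 - 1/2) * bw + (1/2) * a :=
      EReal.toReal_le_toReal hmid_le (hne_bot mid) (EReal.coe_ne_top _)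
    have h2 := hprox' mid hmid_top
    have h4 : q mid = 1 / (2*γ) * ((1 - 1/2) * ‖w - ybar‖^2 + (1/2) * ‖yh - ybar‖^2
        - (1/2) * (1 - 1/2) * ‖w - yh‖^2) := by
      rw [hqdef]; simp only [hmiddef]; rw [combo_norm_sq]
    have hsmall : 1 / (8*γ) * ‖w - yh‖^2 ≤ ε := by
      have e1 : q w = 1 / (2*γ) * ‖w - ybar‖^2 := rfl
      have e2 : q yh = 1 / (2*γ) * ‖yh - ybar‖^2 := rfl
      have hγ0 : (γ:ℝ) ≠ 0 := ne_of_gt hγ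
      have h4' : q mid = (1/2) * q w + (1/2) * q yh - 1/(8*γ) * ‖w - yh‖^2 := by
        rw [h4, e1, e2]; field_simp; ring
      linarith
    have hsq : ‖w - yh‖^2 ≤ 8 * γ * ε := by
      have hmul := mul_le_mul_of_nonneg_left hsmall (by positivity : (0:ℝ) ≤ 8*γ)
      have : 8*γ * (1 / (8*γ) * ‖w - yh‖^2) = ‖w - yh‖^2 := by
        field_simp
      nlinarith
    rw [Metric.mem_closedBall, dist_eq_norm]
    rw [show ‖w - yh‖ = Real.sqrt (‖w - yh‖^2) from (Real.sqrt_sq (norm_nonneg _)).symm]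
    exact Real.sqrt_le_sqrt hsq
  have hKcompact : IsCompact K :=
    (isCompact_closedBall yh _).of_isClosed_subset (hclosed (ψ yh)) hKsub
  -- existence of an exact minimizer p of ψ
  set T : EuclideanSpace ℝ (Fin m) → Set (EuclideanSpace ℝ (Fin m)) :=
    fun y => {w | ψ w ≤ min (ψ y) (ψ yh)} with hTdef
  have hTsub : ∀ y, T y ⊆ K := by
    intro y w hw
    simp only [hKdef, Set.mem_setOf_eq]
    simp only [hTdef, Set.mem_setOf_eq] at hw
    exact le_trans hw (min_le_right _ _)
  have hTclosed : ∀ y, IsClosed (T y) := fun y => hclosed _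
  have hTcompact : ∀ y, IsCompact (T y) :=
    fun y => hKcompact.of_isClosed_subset (hTclosed y) (hTsub y)
  have hTne : ∀ y, (T y).Nonempty := by
    intro y
    rcases le_total (ψ y) (ψ yh) with h | h
    · exact ⟨y, by simp only [hTdef, Set.mem_setOf_eq]; exact le_min le_rfl h⟩
    · exact ⟨yh, by simp only [hTdef, Set.mem_setOf_eq]; exact le_min h le_rfl⟩
  have hdir : Directed (· ⊇ ·) T := by
    intro y1 y2
    rcases le_total (ψ y1) (ψ y2) with h | h
    · refine ⟨y1, fun w hw => hw, fun w hw => ?_⟩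
      simp only [hTdef, Set.mem_setOf_eq] at hw ⊢
      exact le_trans hw (min_le_min h le_rfl)
    · refine ⟨y2, fun w hw => ?_, fun w hw => hw⟩
      simp only [hTdef, Set.mem_setOf_eq] at hw ⊢
      exact le_trans hw (min_le_min h le_rfl)
  obtain ⟨p, hp⟩ :=
    IsCompact.nonempty_iInter_of_directed_nonempty_isCompact_isClosed T hdir hTne hTcompact hTclosed
  have hmin : ∀ y, ψ p ≤ ψ y := by
    intro y
    have h := Set.mem_iInter.1 hp y
    simp only [hTdef, Set.mem_setOf_eq] at h
    exact le_trans h (min_le_left _ _)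
  have hp_top : φ p ≠ ⊤ := by
    refine hntop_of p (ψ yh) ?_ (hmin yh)
    rw [hψ_eq yh hyh_top]; exact EReal.coe_ne_top _
  set b := (φ p).toReal with hbdef
  -- exact subgradient inequality at p
  have hsub : ∀ z, φ z ≠ ⊤ → b + 1/γ * ⟪ybar - p, z - p⟫ ≤ (φ z).toReal := by
    intro z hz
    set c := (φ z).toReal with hcdef
    set D := ‖p - z‖^2 with hDdef
    have hD0 : 0 ≤ D := sq_nonneg _
    have key : ∀ t : ℝ, 0 < t → t ≤ 1 →
        b ≤ c + (q z - q p) - ((1-t)/(2*γ)) * D := by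
      intro t ht0 ht1
      set mid := (1-t) • p + t • z with hmiddef
      have hmid_le := hA p z t ht0.le ht1 hp_top hz
      have hmin' := hmin mid
      have hstep : ((b + q p : ℝ) : EReal) ≤ (((1-t)*b + t*c + q mid : ℝ) : EReal) := by
        calc ((b + q p : ℝ) : EReal) = ψ p := (hψ_eq p hp_top).symm
          _ ≤ ψ mid := hmin'
          _ = φ mid + ((q mid : ℝ) : EReal) := rfl
          _ ≤ (((1-t)*b + t*c : ℝ) : EReal) + ((q mid : ℝ) : EReal) :=
              add_le_add_left hmid_le _
          _ = (((1-t)*b + t*c + q mid : ℝ) : EReal) := by norm_cast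
      have hreal : b + q p ≤ (1-t)*b + t*c + q mid := by exact_mod_cast hstep
      have hqmid : q mid = (1-t) * q p + t * q z - t*(1-t)/(2*γ) * D := by
        have hγ0 : (γ:ℝ) ≠ 0 := ne_of_gt hγ
        rw [hqdef]; simp only [hmiddef]; rw [combo_norm_sq]
        show 1/(2*γ) * ((1-t) * ‖p - ybar‖^2 + t * ‖z - ybar‖^2 - t*(1-t) * ‖p - z‖^2)
          = (1-t) * (1/(2*γ) * ‖p - ybar‖^2) + t * (1/(2*γ) * ‖z - ybar‖^2) - t*(1-t)/(2*γ) * D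
        rw [hDdef]; field_simp
      have h4 : t * b ≤ t * (c + (q z - q p) - ((1-t)/(2*γ)) * D) := by
        rw [hqmid] at hreal
        have hγ0 : (γ:ℝ) ≠ 0 := ne_of_gt hγ
        have expand : t * (c + (q z - q p) - ((1-t)/(2*γ)) * D)
            = t*c + t*(q z - q p) - t*(1-t)/(2*γ) * D := by ring
        rw [expand]; linarith
      exact le_of_mul_le_mul_left h4 ht0
    have hlim : b ≤ c + (q z - q p) - (1/(2*γ)) * D := by
      apply le_of_forall_pos_le_add
      intro δ hδ
      set t := min 1 (2*γ*δ/(D+1)) with htdef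
      have hD1 : (0:ℝ) < D + 1 := by linarith
      have ht0 : 0 < t := lt_min one_pos (by positivity)
      have ht1 : t ≤ 1 := min_le_left _ _
      have hk := key t ht0 ht1
      have ht2 : t * (D+1) ≤ 2*γ*δ := by
        have := min_le_right 1 (2*γ*δ/(D+1))
        calc t * (D+1) ≤ (2*γ*δ/(D+1)) * (D+1) :=
              mul_le_mul_of_nonneg_right this (le_of_lt hD1)
          _ = 2*γ*δ := by field_simp
      have htD : t * D ≤ 2*γ*δ := by nlinarith
      have hdiv : t * D / (2*γ) ≤ δ := by
        rw [div_le_iff₀ (by positivity : (0:ℝ) < 2*γ)]; linarith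
      have e : ((1-t)/(2*γ)) * D = (1/(2*γ)) * D - t * D / (2*γ) := by
        field_simp
      linarith
    have h3 := three_point z p ybar
    have hinner : ⟪z - p, p - ybar⟫ = -⟪ybar - p, z - p⟫ := by
      rw [show p - ybar = -(ybar - p) from (neg_sub ybar p).symm, inner_neg_right,
        real_inner_comm]
    have hq1 : q z - q p - (1/(2*γ)) * D
        = 1/γ * ⟪z - p, p - ybar⟫ := by
      have hγ0 : (γ:ℝ) ≠ 0 := ne_of_gt hγ
      have hDrev : D = ‖z - p‖^2 := by rw [hDdef, norm_sub_rev]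
      rw [hqdef]
      show 1/(2*γ) * ‖z - ybar‖^2 - 1/(2*γ) * ‖p - ybar‖^2 - 1/(2*γ) * D
        = 1/γ * ⟪z - p, p - ybar⟫
      rw [hDrev]; linear_combination (1/(2*γ)) * h3
    have : 1/γ * ⟪z - p, p - ybar⟫ = -(1/γ * ⟪ybar - p, z - p⟫) := by
      rw [hinner]; ring
    linarith [hlim, hq1.symm.le]
  -- the bound on r = p - yh
  refine ⟨p - yh, ?_, ?_⟩
  · have h1 := hsub yh hyh_top
    have h2 := hprox' p hp_top
    have h3 := three_point yh p ybar
    rw [← hadef] at h1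
    rw [← hbdef] at h2
    set I := ⟪yh - p, p - ybar⟫ with hIdef
    set N := ‖yh - p‖^2 with hNdef
    have hγ0 : (γ:ℝ) ≠ 0 := ne_of_gt hγ
    have hin1 : ⟪ybar - p, yh - p⟫ = -I := by
      rw [hIdef, real_inner_comm]
      rw [show ybar - p = -(p - ybar) from (neg_sub p ybar).symm, inner_neg_right]
    have h1' : b ≤ a + 1/γ * I := by
      rw [hin1] at h1
      have e : 1/γ * -I = -(1/γ * I) := by ring
      rw [e] at h1
      linarith
    have hq2 : q yh - q p = 1/(2*γ) * N + 1/γ * I := by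
      show (1/(2*γ) * ‖yh - ybar‖^2) - 1/(2*γ) * ‖p - ybar‖^2 = 1/(2*γ) * N + 1/γ * I
      linear_combination (1/(2*γ)) * h3
    have hsmall : 1/(2*γ) * N ≤ ε := by linarith
    have hNsq : ‖p - yh‖^2 = N := by rw [hNdef, norm_sub_rev]
    have hsq : ‖p - yh‖^2 ≤ 2 * γ * ε := by
      have hmul := mul_le_mul_of_nonneg_left hsmall (by positivity : (0:ℝ) ≤ 2*γ)
      have e3 : 2*γ * (1/(2*γ) * N) = N := by field_simp
      rw [hNsq]
      linarith
    rw [show ‖p - yh‖ = Real.sqrt (‖p - yh‖^2) from (Real.sqrt_sq (norm_nonneg _)).symm]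
    exact Real.sqrt_le_sqrt hsq
  · intro z
    by_cases hz : φ z = ⊤
    · rw [hz]; exact le_top
    have hsubz := hsub z hz
    have h2 := hprox' p hp_top
    rw [← hbdef] at h2
    have hγ0 : (γ:ℝ) ≠ 0 := ne_of_gt hγ
    have hq3 : q p - q yh + 1/γ * ⟪ybar - p, p - yh⟫ = -(1/(2*γ)) * ‖yh - p‖^2 := by
      have h3 := three_point yh p ybar
      have hin : ⟪ybar - p, p - yh⟫ = ⟪yh - p, p - ybar⟫ := by
        rw [show ybar - p = -(p - ybar) from (neg_sub p ybar).symm,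
          show p - yh = -(yh - p) from (neg_sub yh p).symm, inner_neg_neg, real_inner_comm]
      rw [hin]
      show 1/(2*γ) * ‖p - ybar‖^2 - 1/(2*γ) * ‖yh - ybar‖^2 + 1/γ * ⟪yh - p, p - ybar⟫
        = -(1/(2*γ)) * ‖yh - p‖^2
      linear_combination (-(1/(2*γ))) * h3
    have hdec : 1/γ * ⟪ybar - p, z - yh⟫
        = 1/γ * ⟪ybar - p, z - p⟫ + 1/γ * ⟪ybar - p, p - yh⟫ := by
      rw [show z - yh = (z - p) + (p - yh) from by abel, inner_add_right]
      ring
    have hfin : a + (γ⁻¹ * ⟪ybar - p, z - yh⟫ - ε) ≤ (φ z).toReal := by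
      have einv : γ⁻¹ = 1/γ := (one_div γ).symm
      have hnn : 0 ≤ 1/(2*γ) * ‖yh - p‖^2 := by positivity
      rw [einv]
      linarith
    have hrw : ybar - yh - (p - yh) = ybar - p := by abel
    have hinn : ⟪γ⁻¹ • (ybar - yh - (p - yh)), z - yh⟫ = γ⁻¹ * ⟪ybar - p, z - yh⟫ := by
      rw [hrw, real_inner_smul_left]
    rw [real_of yh hyh_top, real_of z hz, hinn, ← hadef, ← EReal.coe_add]
    exact EReal.coe_le_coe_iff.mpr hfin
end

section
/- Let P ⊆ ℝ^d be a polytope (a compact set that is the convex hull of finitely many points), H ⊆ ℝ^d an affine subspace, and suppose Q = P ∩ H is nonempty. Then there exists a constant β ≥ 0 such that for all x ∈ P: dist(x, Q) ≤ β · dist(x, H). -/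
open Metric


variable {E F : Type*} [NormedAddCommGroup E] [InnerProductSpace ℝ E] [FiniteDimensional ℝ E]
  [NormedAddCommGroup F] [NormedSpace ℝ F]

/-- Error bound for fibers of a linear map. -/
lemma fiber_bound (L : E →ₗ[ℝ] F) :
    ∃ C : ℝ, 0 ≤ C ∧ ∀ (x : E) (y : F), (L ⁻¹' {y}).Nonempty →
      Metric.infDist x (L ⁻¹' {y}) ≤ C * ‖L x - y‖ := by
  set W := (LinearMap.ker L)ᗮ with hW
  set Lw : W →ₗ[ℝ] F := L.domRestrict W with hLw
  have hinj : LinearMap.ker Lw = ⊥ := by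
    rw [LinearMap.ker_eq_bot]
    intro u v huv
    have hu : (u : E) - v ∈ LinearMap.ker L := by
      simp only [LinearMap.mem_ker, map_sub]
      have : L (u : E) = L (v : E) := huv
      simp [this]
    have hmem : (u : E) - v ∈ W := sub_mem u.2 v.2
    have h0 : (u : E) - v = 0 :=
      Submodule.disjoint_def.mp (Submodule.orthogonal_disjoint (LinearMap.ker L)).symm _ hmem hu
    exact Subtype.ext (sub_eq_zero.mp h0)
  obtain ⟨K, hK, hKa⟩ := Lw.exists_antilipschitzWith hinj
  refine ⟨K, K.2, ?_⟩
  rintro x y ⟨x₀, hx₀⟩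
  simp only [Set.mem_preimage, Set.mem_singleton_iff] at hx₀
  set w : W := Submodule.orthogonalProjectionOnto W (x - x₀) with hw
  have hker : x - x₀ - (w : E) ∈ Wᗮ := Submodule.sub_starProjection_mem_orthogonal (K := W) (x - x₀)
  have hWo : Wᗮ = LinearMap.ker L := Submodule.orthogonal_orthogonal _
  have h' : L (x - x₀ - (w : E)) = 0 := by
    have := hWo ▸ hker; exact this
  have hLw_eq : L (w : E) = L x - y := by
    have h2 : L x - L x₀ - L (w : E) = 0 := by simpa [map_sub] using h'
    have h3 : L x - L x₀ = L (w : E) := by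
      have := sub_eq_zero.mp h2; exact this
    rw [hx₀] at h3; exact h3.symm
  set z : E := x - (w : E) with hz
  have hzmem : z ∈ L ⁻¹' {y} := by
    simp only [Set.mem_preimage, Set.mem_singleton_iff, hz, map_sub, hLw_eq]
    abel
  calc Metric.infDist x (L ⁻¹' {y}) ≤ dist x z := Metric.infDist_le_dist_of_mem hzmem
    _ = ‖(w : E)‖ := by rw [dist_eq_norm]; simp [hz]
    _ ≤ K * ‖Lw w‖ := by
        have := hKa.le_mul_dist w 0
        simpa [dist_eq_norm] using this
    _ = K * ‖L x - y‖ := by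
        rw [show Lw w = L (w : E) from rfl, hLw_eq]

lemma affine_set_closed (U : Submodule ℝ E) (p : E) : IsClosed {y : E | y - p ∈ U} := by
  have : {y : E | y - p ∈ U} = (fun y => y - p) ⁻¹' (U : Set E) := rfl
  rw [this]
  exact (Submodule.closed_of_finiteDimensional U).preimage (continuous_id.sub continuous_const)

lemma proj_perp_le_infDist (U : Submodule ℝ E) (p x : E) :
    ‖(Submodule.orthogonalProjectionOnto Uᗮ (x - p) : E)‖ ≤ Metric.infDist x {y | y - p ∈ U} := by
  have hne : ({y : E | y - p ∈ U}).Nonempty := ⟨p, by simp⟩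
  obtain ⟨s, hs, hds⟩ := (affine_set_closed U p).exists_infDist_eq_dist hne x
  rw [hds]
  have hsp : Submodule.orthogonalProjectionOnto Uᗮ (s - p) = 0 :=
    Submodule.orthogonalProjectionOnto_eq_zero_iff.mpr (Submodule.le_orthogonal_orthogonal U hs)
  have hsplit : Submodule.orthogonalProjectionOnto Uᗮ (x - p) = Submodule.orthogonalProjectionOnto Uᗮ (x - s) := by
    have : x - p = (x - s) + (s - p) := by abel
    rw [this, map_add, hsp, add_zero]
  rw [hsplit, dist_eq_norm]
  calc ‖(Submodule.orthogonalProjectionOnto Uᗮ (x - s) : E)‖ = ‖Submodule.orthogonalProjectionOnto Uᗮ (x - s)‖ := rfl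
    _ ≤ ‖Submodule.orthogonalProjectionOnto Uᗮ‖ * ‖x - s‖ := (Submodule.orthogonalProjectionOnto Uᗮ).le_opNorm _
    _ ≤ 1 * ‖x - s‖ := by
        exact mul_le_mul_of_nonneg_right (Submodule.orthogonalProjectionOnto_norm_le _) (norm_nonneg _)
    _ = ‖x - s‖ := one_mul _

lemma two_affine_bound (U₁ U₂ : Submodule ℝ E) (p : E) :
    ∃ C : ℝ, 0 ≤ C ∧ ∀ x : E,
      Metric.infDist x ({y | y - p ∈ U₁} ∩ {y | y - p ∈ U₂}) ≤
        C * (Metric.infDist x {y | y - p ∈ U₁} + Metric.infDist x {y | y - p ∈ U₂}) := by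
  classical
  set P₁ : E →ₗ[ℝ] E := (U₁ᗮ.subtype).comp (Submodule.orthogonalProjectionOnto U₁ᗮ).toLinearMap with hP₁
  set P₂ : E →ₗ[ℝ] E := (U₂ᗮ.subtype).comp (Submodule.orthogonalProjectionOnto U₂ᗮ).toLinearMap with hP₂
  set L : E →ₗ[ℝ] E × E := P₁.prod P₂ with hLdef
  obtain ⟨C, hC0, hC⟩ := fiber_bound L
  refine ⟨C, hC0, fun x => ?_⟩
  have key : ∀ (U : Submodule ℝ E) (v : E),
      ((Submodule.orthogonalProjectionOnto Uᗮ v : E) = 0) ↔ v ∈ U := by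
    intro U v
    rw [show ((Submodule.orthogonalProjectionOnto Uᗮ v : E) = 0) ↔ Submodule.orthogonalProjectionOnto Uᗮ v = 0 from
      Submodule.coe_eq_zero, Submodule.orthogonalProjectionOnto_eq_zero_iff, Submodule.orthogonal_orthogonal]
  have hpre : L ⁻¹' {L p} = {y | y - p ∈ U₁} ∩ {y | y - p ∈ U₂} := by
    ext y
    simp only [Set.mem_preimage, Set.mem_singleton_iff, hLdef, LinearMap.prod_apply,
      Function.prod, Prod.mk.injEq, Set.mem_inter_iff, Set.mem_setOf_eq]
    rw [← sub_eq_zero (a := P₁ y), ← sub_eq_zero (a := P₂ y), ← map_sub, ← map_sub]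
    have e1 : P₁ (y - p) = (Submodule.orthogonalProjectionOnto U₁ᗮ (y - p) : E) := rfl
    have e2 : P₂ (y - p) = (Submodule.orthogonalProjectionOnto U₂ᗮ (y - p) : E) := rfl
    rw [e1, e2, key U₁ (y - p), key U₂ (y - p)]
  have hLnorm : ‖L x - L p‖ ≤
      Metric.infDist x {y | y - p ∈ U₁} + Metric.infDist x {y | y - p ∈ U₂} := by
    have h1 : ‖P₁ x - P₁ p‖ ≤ Metric.infDist x {y | y - p ∈ U₁} := by
      rw [← map_sub]
      exact proj_perp_le_infDist U₁ p x
    have h2 : ‖P₂ x - P₂ p‖ ≤ Metric.infDist x {y | y - p ∈ U₂} := by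
      rw [← map_sub]
      exact proj_perp_le_infDist U₂ p x
    have : ‖L x - L p‖ = max ‖P₁ x - P₁ p‖ ‖P₂ x - P₂ p‖ := by
      rw [hLdef]
      rfl
    rw [this]
    refine max_le (h1.trans ?_) (h2.trans ?_)
    · exact le_add_of_nonneg_right Metric.infDist_nonneg
    · exact le_add_of_nonneg_left Metric.infDist_nonneg
  calc Metric.infDist x ({y | y - p ∈ U₁} ∩ {y | y - p ∈ U₂})
      = Metric.infDist x (L ⁻¹' {L p}) := by rw [hpre]
    _ ≤ C * ‖L x - L p‖ := hC x (L p) ⟨p, rfl⟩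
    _ ≤ C * _ := mul_le_mul_of_nonneg_left hLnorm hC0

open scoped RealInnerProductSpace

lemma halfspace_convex (a : E) (r : ℝ) : Convex ℝ {x : E | ⟪a, x⟫ ≤ r} :=
  convex_halfSpace_le ⟨fun x y => inner_add_right a x y, fun t x => real_inner_smul_right a x t⟩ r

lemma affine_set_convex (U : Submodule ℝ E) (p : E) : Convex ℝ {y : E | y - p ∈ U} := by
  intro x hx y hy s t hs ht hst
  have h2 : s • p + t • p = p := by rw [← add_smul, hst, one_smul]
  have h : s • x + t • y - p = s • (x - p) + t • (y - p) := by
    calc s • x + t • y - p = s • x + t • y - (s • p + t • p) := by rw [h2]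
      _ = (s • x - s • p) + (t • y - t • p) := by abel
      _ = s • (x - p) + t • (y - p) := by rw [smul_sub, smul_sub]
  show s • x + t • y - p ∈ U
  rw [h]
  exact U.add_mem (U.smul_mem _ hx) (U.smul_mem _ hy)

lemma feas_closed {k : ℕ} (a : Fin k → E) (c : Fin k → ℝ) :
    IsClosed {x : E | ∀ i, ⟪a i, x⟫ ≤ c i} := by
  have h : {x : E | ∀ i, ⟪a i, x⟫ ≤ c i} = ⋂ i, {x | ⟪a i, x⟫ ≤ c i} := by
    ext x; simp [Set.mem_iInter]
  rw [h]
  exact isClosed_iInter fun i =>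
    isClosed_le (Continuous.inner continuous_const continuous_id) continuous_const

lemma feas_convex {k : ℕ} (a : Fin k → E) (c : Fin k → ℝ) :
    Convex ℝ {x : E | ∀ i, ⟪a i, x⟫ ≤ c i} := by
  have h : {x : E | ∀ i, ⟪a i, x⟫ ≤ c i} = ⋂ i, {x | ⟪a i, x⟫ ≤ c i} := by
    ext x; simp [Set.mem_iInter]
  rw [h]
  exact convex_iInter fun i => halfspace_convex (a i) (c i)

lemma hoffman_ind : ∀ (k : ℕ) (a : Fin k → E) (c : Fin k → ℝ) (U : Submodule ℝ E) (p : E)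
    (B : Set E), IsCompact B →
    ({x | x - p ∈ U} ∩ {x | ∀ i, ⟪a i, x⟫ ≤ c i}).Nonempty →
    ∃ β : ℝ, 0 ≤ β ∧ ∀ x ∈ B, (∀ i, ⟪a i, x⟫ ≤ c i) →
      Metric.infDist x ({x | x - p ∈ U} ∩ {x | ∀ i, ⟪a i, x⟫ ≤ c i}) ≤
        β * Metric.infDist x {x | x - p ∈ U} := by
  intro k
  induction k with
  | zero =>
    intro a c U p B _ _
    refine ⟨1, zero_le_one, fun x _ _ => ?_⟩
    have h : {x : E | ∀ i : Fin 0, ⟪a i, x⟫ ≤ c i} = Set.univ :=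
      Set.eq_univ_of_forall (fun x => fun i => i.elim0)
    rw [h, Set.inter_univ, one_mul]
  | succ k IH =>
    intro a c U p B hB hKne
    classical
    set M : Set E := {x | x - p ∈ U} with hMdef
    set feas : Set E := {x | ∀ i, ⟪a i, x⟫ ≤ c i} with hfeasdef
    set K : Set E := M ∩ feas with hKdef
    set a' : Fin k → E := fun i => a i.castSucc with ha'
    set c' : Fin k → ℝ := fun i => c i.castSucc with hc'
    set feas' : Set E := {x | ∀ i, ⟪a' i, x⟫ ≤ c' i} with hfeas'def
    set K' : Set E := M ∩ feas' with hK'def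
    set al : E := a (Fin.last k) with hal
    set cl : ℝ := c (Fin.last k) with hcl
    have hfeas_iff : ∀ x, x ∈ feas ↔ (x ∈ feas' ∧ ⟪al, x⟫ ≤ cl) := by
      intro x
      constructor
      · exact fun h => ⟨fun i => h i.castSucc, h (Fin.last k)⟩
      · rintro ⟨h1, h2⟩ i
        exact Fin.lastCases h2 h1 i
    have hKK' : K ⊆ K' := Set.inter_subset_inter_right _ (fun x hx => ((hfeas_iff x).mp hx).1)
    obtain ⟨z₀, hz₀⟩ := hKne
    have hK'ne : K'.Nonempty := ⟨z₀, hKK' hz₀⟩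
    obtain ⟨β₁, hβ₁0, hβ₁pre⟩ := IH a' c' U p B hB hK'ne
    have hβ₁ : ∀ x ∈ B, x ∈ feas' → Metric.infDist x K' ≤ β₁ * Metric.infDist x M :=
      fun x hx hxf => hβ₁pre x hx hxf
    have hMclosed : IsClosed M := affine_set_closed U p
    have hK'closed : IsClosed K' := hMclosed.inter (feas_closed a' c')
    have hK'conv : Convex ℝ K' := (affine_set_convex U p).inter (feas_convex a' c')
    have hcommon : ∀ x ∈ B, x ∈ feas → ∃ y ∈ K',
        dist x y ≤ β₁ * Metric.infDist x M := by
      intro x hxB hxf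
      obtain ⟨y, hyK', hy⟩ := hK'closed.exists_infDist_eq_dist hK'ne x
      refine ⟨y, hyK', ?_⟩
      rw [← hy]
      exact hβ₁ x hxB ((hfeas_iff x).mp hxf).1
    by_cases hA : ∃ z ∈ K, ⟪al, z⟫ < cl
    · -- Slater case
      obtain ⟨z, hzK, hzlt⟩ := hA
      set γ : ℝ := cl - ⟪al, z⟫ with hγdef
      have hγ : 0 < γ := by rw [hγdef]; linarith
      obtain ⟨R₀, hR₀⟩ := hB.isBounded.subset_closedBall z
      set R : ℝ := max R₀ 0 with hRdef
      have hR0 : 0 ≤ R := le_max_right _ _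
      have hR : ∀ x ∈ B, dist x z ≤ R := fun x hx =>
        le_trans (Metric.mem_closedBall.mp (hR₀ hx)) (le_max_left _ _)
      refine ⟨β₁ + ‖al‖ * β₁ * (R + β₁ * R) / γ, by positivity, ?_⟩
      intro x hxB hxf
      set d : ℝ := Metric.infDist x M with hd
      have hd0 : 0 ≤ d := Metric.infDist_nonneg
      have hdR : d ≤ R := le_trans (Metric.infDist_le_dist_of_mem hzK.1) (hR x hxB)
      obtain ⟨y, hyK', hxy⟩ := hcommon x hxB hxf
      by_cases hy2 : ⟪al, y⟫ ≤ cl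
      · have hyK : y ∈ K := ⟨hyK'.1, (hfeas_iff y).mpr ⟨hyK'.2, hy2⟩⟩
        calc Metric.infDist x K ≤ dist x y := Metric.infDist_le_dist_of_mem hyK
          _ ≤ β₁ * d := hxy
          _ ≤ (β₁ + ‖al‖ * β₁ * (R + β₁ * R) / γ) * d := by
              have h5 : (0:ℝ) ≤ ‖al‖ * β₁ * (R + β₁ * R) / γ := by positivity
              nlinarith
      · push_neg at hy2
        set δ : ℝ := ⟪al, y⟫ - cl with hδdef
        have hδ : 0 < δ := by rw [hδdef]; linarith
        have hδle : δ ≤ ‖al‖ * dist x y := by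
          have h1 : ⟪al, x⟫ ≤ cl := ((hfeas_iff x).mp hxf).2
          have h2 : ⟪al, y⟫ - ⟪al, x⟫ = ⟪al, y - x⟫ := (inner_sub_right al y x).symm
          have h3 : ⟪al, y - x⟫ ≤ ‖al‖ * ‖y - x‖ := real_inner_le_norm al (y - x)
          rw [dist_eq_norm, norm_sub_rev x y]
          calc δ = ⟪al, y⟫ - cl := rfl
            _ ≤ ⟪al, y⟫ - ⟪al, x⟫ := by linarith
            _ = ⟪al, y - x⟫ := h2
            _ ≤ ‖al‖ * ‖y - x‖ := h3
        set t : ℝ := δ / (δ + γ) with htdef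
        have hne : δ + γ ≠ 0 := by positivity
        have ht0 : 0 ≤ t := by positivity
        have ht1 : t ≤ 1 := by
          rw [htdef, div_le_one (by linarith)]; linarith
        set y' : E := y + t • (z - y) with hy'def
        have hy'K : y' ∈ K := by
          have hcomb : (1 - t) • y + t • z = y' := by
            rw [hy'def, sub_smul, one_smul, smul_sub]; abel
          have hy'K' : y' ∈ K' := by
            rw [← hcomb]
            exact hK'conv hyK' (hKK' hzK) (by linarith) ht0 (by ring)
          have hzy' : ⟪al, z⟫ - ⟪al, y⟫ = -(δ + γ) := by rw [hδdef, hγdef]; ring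
          have hy3 : ⟪al, y⟫ = cl + δ := by rw [hδdef]; ring
          have h4 : t * (δ + γ) = δ := div_mul_cancel₀ _ hne
          have hlast : ⟪al, y'⟫ = cl := by
            rw [hy'def, inner_add_right, real_inner_smul_right, inner_sub_right]
            linear_combination hy3 + t * hzy' - h4
          exact ⟨hy'K'.1, (hfeas_iff y').mpr ⟨hy'K'.2, le_of_eq hlast⟩⟩
        have hxyd : dist x y ≤ β₁ * R := hxy.trans (by nlinarith)
        have hzy : ‖z - y‖ ≤ R + β₁ * R := by
          calc ‖z - y‖ = dist z y := (dist_eq_norm z y).symm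
            _ ≤ dist z x + dist x y := dist_triangle z x y
            _ ≤ R + β₁ * R := by
                have h1 : dist z x ≤ R := by rw [dist_comm]; exact hR x hxB
                linarith
        have htle : t ≤ ‖al‖ * β₁ * d / γ := by
          have h1 : t ≤ δ / γ := by
            rw [htdef]
            exact div_le_div_of_nonneg_left hδ.le hγ (by linarith)
          have h2 : δ ≤ ‖al‖ * (β₁ * d) := by
            calc δ ≤ ‖al‖ * dist x y := hδle
              _ ≤ ‖al‖ * (β₁ * d) := mul_le_mul_of_nonneg_left hxy (norm_nonneg _)
          calc t ≤ δ / γ := h1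
            _ ≤ ‖al‖ * β₁ * d / γ := by
                rw [mul_assoc]
                gcongr
        have hyy' : dist y y' = t * ‖z - y‖ := by
          have h6 : y - y' = -(t • (z - y)) := by rw [hy'def]; abel
          rw [dist_eq_norm, h6, norm_neg, norm_smul, Real.norm_eq_abs, abs_of_nonneg ht0]
        calc Metric.infDist x K ≤ dist x y' := Metric.infDist_le_dist_of_mem hy'K
          _ ≤ dist x y + dist y y' := dist_triangle x y y'
          _ ≤ β₁ * d + (‖al‖ * β₁ * d / γ) * (R + β₁ * R) := by
              rw [hyy']
              have h7 := mul_le_mul htle hzy (norm_nonneg _) (by positivity)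
              linarith
          _ = (β₁ + ‖al‖ * β₁ * (R + β₁ * R) / γ) * d := by ring
    · -- degenerate case
      push_neg at hA
      have hz₀eq : ⟪al, z₀⟫ = cl := le_antisymm ((hfeas_iff z₀).mp hz₀.2).2 (hA z₀ hz₀)
      set Ua : Submodule ℝ E :=
        { carrier := {v | ⟪al, v⟫ = 0}
          add_mem' := by intro u v hu hv; simp only [Set.mem_setOf_eq] at *
                         rw [inner_add_right, hu, hv, add_zero]
          zero_mem' := by simp
          smul_mem' := by intro s v hv; simp only [Set.mem_setOf_eq] at *
                          rw [real_inner_smul_right, hv, mul_zero] } with hUadef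
      have hUamem : ∀ v : E, v ∈ Ua ↔ ⟪al, v⟫ = 0 := fun v => Iff.rfl
      set U'' : Submodule ℝ E := U ⊓ Ua with hU''def
      set M'' : Set E := {x | x - z₀ ∈ U''} with hM''def
      have hz₀M : z₀ - p ∈ U := hz₀.1
      have hMeq : {y : E | y - z₀ ∈ U} = M := by
        ext y
        simp only [Set.mem_setOf_eq, hMdef]
        constructor
        · intro h
          have := U.add_mem h hz₀M
          simpa [sub_add_sub_cancel] using this
        · intro h
          have := U.sub_mem h hz₀M
          simpa [sub_sub_sub_cancel_right] using this
      have hKeq : K = M'' ∩ feas' := by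
        ext x
        constructor
        · intro hx
          have hxal : ⟪al, x⟫ = cl := le_antisymm ((hfeas_iff x).mp hx.2).2 (hA x hx)
          refine ⟨?_, ((hfeas_iff x).mp hx.2).1⟩
          show x - z₀ ∈ U''
          rw [hU''def, Submodule.mem_inf]
          constructor
          · have := U.sub_mem hx.1 hz₀M
            simpa [sub_sub_sub_cancel_right] using this
          · rw [hUamem, inner_sub_right, hxal, hz₀eq, sub_self]
        · rintro ⟨hx1, hx2⟩
          rw [hM''def, Set.mem_setOf_eq, hU''def, Submodule.mem_inf] at hx1
          constructor
          · show x - p ∈ U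
            have := U.add_mem hx1.1 hz₀M
            simpa [sub_add_sub_cancel] using this
          · refine (hfeas_iff x).mpr ⟨hx2, ?_⟩
            have h0 : ⟪al, x - z₀⟫ = 0 := (hUamem _).mp hx1.2
            rw [inner_sub_right, hz₀eq] at h0
            linarith
      have hM''K : (M'' ∩ feas').Nonempty := ⟨z₀, hKeq ▸ hz₀⟩
      obtain ⟨β₂, hβ₂0, hβ₂pre⟩ := IH a' c' U'' z₀ B hB hM''K
      have hβ₂ : ∀ x ∈ B, x ∈ feas' → Metric.infDist x (M'' ∩ feas') ≤
          β₂ * Metric.infDist x M'' := fun x hx hxf => hβ₂pre x hx hxf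
      obtain ⟨C, hC0, hC⟩ := two_affine_bound U Ua z₀
      have hCbound : ∀ x : E, Metric.infDist x M'' ≤
          C * (Metric.infDist x M + Metric.infDist x {y | y - z₀ ∈ Ua}) := by
        intro x
        have h1 := hC x
        have h2 : {y : E | y - z₀ ∈ U} ∩ {y | y - z₀ ∈ Ua} = M'' := by
          ext y
          simp only [Set.mem_inter_iff, Set.mem_setOf_eq, hM''def, hU''def, Submodule.mem_inf]
        rw [h2, hMeq] at h1
        exact h1
      refine ⟨max β₁ (β₂ * C * (1 + β₁)), le_max_of_le_left hβ₁0, ?_⟩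
      intro x hxB hxf
      set d : ℝ := Metric.infDist x M with hd
      have hd0 : 0 ≤ d := Metric.infDist_nonneg
      obtain ⟨y, hyK', hxy⟩ := hcommon x hxB hxf
      by_cases hy2 : ⟪al, y⟫ ≤ cl
      · have hyK : y ∈ K := ⟨hyK'.1, (hfeas_iff y).mpr ⟨hyK'.2, hy2⟩⟩
        calc Metric.infDist x K ≤ dist x y := Metric.infDist_le_dist_of_mem hyK
          _ ≤ β₁ * d := hxy
          _ ≤ max β₁ (β₂ * C * (1 + β₁)) * d :=
              mul_le_mul_of_nonneg_right (le_max_left _ _) hd0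
      · push_neg at hy2
        have hxal : ⟪al, x⟫ ≤ cl := ((hfeas_iff x).mp hxf).2
        have halne : al ≠ 0 := by
          intro h0
          rw [h0] at hy2 hxal
          simp only [inner_zero_left] at hy2 hxal
          linarith
        have hresid : cl - ⟪al, x⟫ ≤ ‖al‖ * (β₁ * d) := by
          have h2 : ⟪al, y - x⟫ ≤ ‖al‖ * ‖y - x‖ := real_inner_le_norm al (y - x)
          rw [inner_sub_right] at h2
          have h3 : ‖y - x‖ = dist x y := by rw [← dist_eq_norm, dist_comm]
          have h4 : ‖al‖ * dist x y ≤ ‖al‖ * (β₁ * d) :=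
            mul_le_mul_of_nonneg_left hxy (norm_nonneg _)
          rw [h3] at h2
          linarith
        have hS2 : Metric.infDist x {y | y - z₀ ∈ Ua} ≤ β₁ * d := by
          set w : E := x + ((cl - ⟪al, x⟫) / (‖al‖ ^ 2)) • al with hwdef
          have hal2 : (0:ℝ) < ‖al‖ ^ 2 := by have := norm_pos_iff.mpr halne; positivity
          have hwmem : w ∈ {y : E | y - z₀ ∈ Ua} := by
            show w - z₀ ∈ Ua
            rw [hUamem, hwdef]
            have : x + ((cl - ⟪al, x⟫) / ‖al‖ ^ 2) • al - z₀
                = (x - z₀) + ((cl - ⟪al, x⟫) / ‖al‖ ^ 2) • al := by abel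
            rw [this, inner_add_right, inner_sub_right, real_inner_smul_right,
              real_inner_self_eq_norm_sq, hz₀eq]
            rw [div_mul_cancel₀ _ (ne_of_gt hal2)]
            ring
          have hdw : dist x w = (cl - ⟪al, x⟫) / ‖al‖ := by
            rw [hwdef, dist_eq_norm]
            have h6 : x - (x + ((cl - ⟪al, x⟫) / ‖al‖ ^ 2) • al)
                = -(((cl - ⟪al, x⟫) / ‖al‖ ^ 2) • al) := by abel
            rw [h6, norm_neg, norm_smul, Real.norm_eq_abs,
              abs_of_nonneg (div_nonneg (by linarith) hal2.le)]
            rw [div_mul_eq_mul_div, pow_two]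
            rw [mul_comm ‖al‖ ‖al‖, ← div_div, mul_div_assoc, div_self (norm_ne_zero_iff.mpr halne)]
            ring
          calc Metric.infDist x {y | y - z₀ ∈ Ua} ≤ dist x w :=
              Metric.infDist_le_dist_of_mem hwmem
            _ = (cl - ⟪al, x⟫) / ‖al‖ := hdw
            _ ≤ β₁ * d := by
                rw [div_le_iff₀ (norm_pos_iff.mpr halne)]
                calc cl - ⟪al, x⟫ ≤ ‖al‖ * (β₁ * d) := hresid
                  _ = β₁ * d * ‖al‖ := by ring
        calc Metric.infDist x K = Metric.infDist x (M'' ∩ feas') := by rw [hKeq]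
          _ ≤ β₂ * Metric.infDist x M'' := hβ₂ x hxB ((hfeas_iff x).mp hxf).1
          _ ≤ β₂ * (C * (d + β₁ * d)) := by
              have := hCbound x
              have h8 : Metric.infDist x M'' ≤ C * (d + β₁ * d) := by
                have h9 := hS2
                have h10 : Metric.infDist x M + Metric.infDist x {y | y - z₀ ∈ Ua}
                    ≤ d + β₁ * d := by
                  rw [← hd]; linarith
                calc Metric.infDist x M'' ≤
                    C * (Metric.infDist x M + Metric.infDist x {y | y - z₀ ∈ Ua}) := this
                  _ ≤ C * (d + β₁ * d) := mul_le_mul_of_nonneg_left h10 hC0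
              exact mul_le_mul_of_nonneg_left h8 hβ₂0
          _ = (β₂ * C * (1 + β₁)) * d := by ring
          _ ≤ max β₁ (β₂ * C * (1 + β₁)) * d :=
              mul_le_mul_of_nonneg_right (le_max_right _ _) hd0

set_option maxHeartbeats 1000000 in
theorem stmt_9 {d m : ℕ} (V : Finset (EuclideanSpace ℝ (Fin d)))
    (P : Set (EuclideanSpace ℝ (Fin d))) (hP : P = convexHull ℝ (V : Set (EuclideanSpace ℝ (Fin d))))
    (A : EuclideanSpace ℝ (Fin d) →ₗ[ℝ] EuclideanSpace ℝ (Fin m))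
    (b : EuclideanSpace ℝ (Fin m))
    (H : Set (EuclideanSpace ℝ (Fin d))) (hH : H = {x | A x = b})
    (Q : Set (EuclideanSpace ℝ (Fin d))) (hQ : Q = P ∩ H) (hQne : Q.Nonempty) :
    ∃ β : ℝ, 0 ≤ β ∧ ∀ x ∈ P, Metric.infDist x Q ≤ β * Metric.infDist x H := by
  classical
  obtain ⟨q, hqQ⟩ := hQne
  rw [hQ] at hqQ
  have hqP : q ∈ P := hqQ.1
  have hqH : q ∈ H := hqQ.2
  have hqA : A q = b := by rw [hH] at hqH; exact hqH
  set n := V.card with hn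
  set v : Fin n → EuclideanSpace ℝ (Fin d) :=
    fun i => (V.equivFin.symm i : EuclideanSpace ℝ (Fin d)) with hv
  have hvV : ∀ i, v i ∈ V := fun i => (V.equivFin.symm i).2
  set φ : EuclideanSpace ℝ (Fin n) →ₗ[ℝ] EuclideanSpace ℝ (Fin d) :=
    { toFun := fun l => ∑ i, l i • v i
      map_add' := by
        intro l m'
        simp only [PiLp.add_apply, add_smul]
        rw [Finset.sum_add_distrib]
      map_smul' := by
        intro s l
        simp only [PiLp.smul_apply, smul_eq_mul, RingHom.id_apply, Finset.smul_sum, smul_smul] } with hφdef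
  have hφapp : ∀ l : EuclideanSpace ℝ (Fin n), φ l = ∑ i, l i • v i := fun l => rfl
  set Δ : Set (EuclideanSpace ℝ (Fin n)) := {l | (∀ i, 0 ≤ l i) ∧ ∑ i, l i = 1} with hΔdef
  have hΔconv : Convex ℝ Δ := by
    intro l hl m' hm s t hs ht hst
    constructor
    · intro i
      have h1 : (s • l + t • m') i = s * l i + t * m' i := by
        simp [PiLp.add_apply, PiLp.smul_apply, smul_eq_mul]
      rw [h1]
      have := hl.1 i; have := hm.1 i
      positivity
    · have h1 : ∑ i, (s • l + t • m') i = s * (∑ i, l i) + t * (∑ i, m' i) := by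
        simp only [PiLp.add_apply, PiLp.smul_apply, smul_eq_mul, Finset.mul_sum]
        rw [Finset.sum_add_distrib]
      rw [h1, hl.2, hm.2]
      linarith
  have hPeq : P = φ '' Δ := by
    rw [hP]
    apply le_antisymm
    · apply convexHull_min
      · intro u hu
        set i : Fin n := V.equivFin ⟨u, hu⟩ with hi
        have hvi : v i = u := by rw [hv]; simp [hi]
        refine ⟨EuclideanSpace.single i (1:ℝ), ⟨?_, ?_⟩, ?_⟩
        · intro j
          rw [EuclideanSpace.single_apply]
          split <;> norm_num
        · simp [EuclideanSpace.single_apply]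
        · rw [hφapp]
          rw [show ∑ j, (EuclideanSpace.single i (1:ℝ)) j • v j = v i by
            simp [EuclideanSpace.single_apply, ite_smul]]
          exact hvi
      · exact hΔconv.linear_image φ
    · rintro x ⟨l, hl, rfl⟩
      have h1 : φ l = Finset.univ.centerMass l v := by
        rw [Finset.centerMass_eq_of_sum_1 _ _ hl.2, hφapp]
      rw [h1]
      exact Finset.centerMass_mem_convexHull _ (fun i _ => hl.1 i)
        (by rw [hl.2]; norm_num) (fun i _ => hvV i)
  obtain ⟨p₀, hp₀Δ, hp₀q⟩ : ∃ l ∈ Δ, φ l = q := by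
    rw [hPeq] at hqP
    obtain ⟨l, hl, hlq⟩ := hqP
    exact ⟨l, hl, hlq⟩
  set sumLM : EuclideanSpace ℝ (Fin n) →ₗ[ℝ] ℝ :=
    { toFun := fun l => ∑ i, l i
      map_add' := by intro l m'; simp only [PiLp.add_apply]; rw [Finset.sum_add_distrib]
      map_smul' := by intro s l; simp [PiLp.smul_apply, smul_eq_mul, Finset.mul_sum] } with hsumdef
  set Lpair : EuclideanSpace ℝ (Fin n) →ₗ[ℝ] (EuclideanSpace ℝ (Fin m)) × ℝ :=
    (A.comp φ).prod sumLM with hLpairdef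
  have hLpairapp : ∀ l, Lpair l = (A (φ l), ∑ i, l i) := fun l => rfl
  set U : Submodule ℝ (EuclideanSpace ℝ (Fin n)) := LinearMap.ker Lpair with hUdef
  set Mset : Set (EuclideanSpace ℝ (Fin n)) := {l | l - p₀ ∈ U} with hMsetdef
  have hLp₀ : Lpair p₀ = (b, 1) := by
    rw [hLpairapp, hp₀q, hqA, hp₀Δ.2]
  have hMfib : Mset = Lpair ⁻¹' {(b, 1)} := by
    ext l
    simp only [hMsetdef, Set.mem_setOf_eq, hUdef, LinearMap.mem_ker, map_sub, sub_eq_zero,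
      Set.mem_preimage, Set.mem_singleton_iff, hLp₀]
  set av : Fin n → EuclideanSpace ℝ (Fin n) :=
    fun i => -(EuclideanSpace.single i (1:ℝ)) with havdef
  set cv : Fin n → ℝ := fun _ => 0 with hcvdef
  have hinner : ∀ (i : Fin n) (l : EuclideanSpace ℝ (Fin n)), ⟪av i, l⟫ = -(l i) := by
    intro i l
    rw [havdef]
    simp only [inner_neg_left, EuclideanSpace.inner_single_left]
    simp
  have hfeasΔ : ∀ l : EuclideanSpace ℝ (Fin n),
      (∀ i, ⟪av i, l⟫ ≤ cv i) ↔ ∀ i, 0 ≤ l i := by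
    intro l
    constructor
    · intro h i
      have := h i
      rw [hinner] at this
      simp only [hcvdef] at this
      linarith
    · intro h i
      rw [hinner]
      simp only [hcvdef]
      linarith [h i]
  set K : Set (EuclideanSpace ℝ (Fin n)) :=
    Mset ∩ {l | ∀ i, ⟪av i, l⟫ ≤ cv i} with hKdef
  have hKchar : ∀ l, l ∈ K ↔ (l ∈ Δ ∧ A (φ l) = b) := by
    intro l
    rw [hKdef, Set.mem_inter_iff]
    simp only [Set.mem_setOf_eq]
    rw [hfeasΔ l]
    constructor
    · rintro ⟨h1, h2⟩
      have h3 : Lpair l = (b, 1) := by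
        have := hMfib ▸ h1
        simpa using this
      rw [hLpairapp] at h3
      have h4 := Prod.ext_iff.mp h3
      exact ⟨⟨h2, h4.2⟩, h4.1⟩
    · rintro ⟨⟨h1, h2⟩, h3⟩
      refine ⟨?_, h1⟩
      rw [hMfib]
      simp only [Set.mem_preimage, Set.mem_singleton_iff, hLpairapp, h2, h3]
  -- compactness of Δ
  have hΔclosed : IsClosed Δ := by
    have e1 : Δ = (⋂ i, {l : EuclideanSpace ℝ (Fin n) | 0 ≤ l i}) ∩
        {l | ∑ i, l i = 1} := by
      ext l; simp [hΔdef, Set.mem_iInter]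
    rw [e1]
    refine IsClosed.inter (isClosed_iInter fun i => ?_) ?_
    · exact isClosed_le continuous_const ((continuous_apply i).comp (PiLp.continuous_ofLp 2 _))
    · exact isClosed_eq (continuous_finset_sum _ fun i _ => (continuous_apply i).comp (PiLp.continuous_ofLp 2 _)) continuous_const
  have hΔsub : Δ ⊆ Metric.closedBall 0 1 := by
    intro l hl
    rw [Metric.mem_closedBall, dist_zero_right]
    rw [EuclideanSpace.norm_eq]
    apply Real.sqrt_le_one.mpr
    have h1 : ∀ i, ‖l i‖ ^ 2 ≤ l i := by
      intro i
      have h2 : l i ≤ 1 := by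
        have := Finset.single_le_sum (f := fun j => l j) (fun j _ => hl.1 j)
          (Finset.mem_univ i)
        rw [hl.2] at this
        exact this
      rw [Real.norm_eq_abs, sq_abs]
      nlinarith [hl.1 i]
    calc ∑ i, ‖l i‖ ^ 2 ≤ ∑ i, l i := Finset.sum_le_sum fun i _ => h1 i
      _ = 1 := hl.2
  have hΔcompact : IsCompact Δ :=
    (isCompact_closedBall (0 : EuclideanSpace ℝ (Fin n)) 1).of_isClosed_subset hΔclosed hΔsub
  have hKne : K.Nonempty := ⟨p₀, (hKchar p₀).mpr ⟨hp₀Δ, by rw [hp₀q]; exact hqA⟩⟩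
  obtain ⟨β₀, hβ₀0, hβ₀pre⟩ := hoffman_ind n av cv U p₀ Δ hΔcompact hKne
  have hβ₀ : ∀ l ∈ Δ, (∀ i, ⟪av i, l⟫ ≤ cv i) →
      Metric.infDist l K ≤ β₀ * Metric.infDist l Mset :=
    fun l hl hlf => hβ₀pre l hl hlf
  obtain ⟨C₁, hC₁0, hC₁⟩ := fiber_bound Lpair
  set φC : EuclideanSpace ℝ (Fin n) →L[ℝ] EuclideanSpace ℝ (Fin d) :=
    LinearMap.toContinuousLinearMap φ with hφC
  set AC : EuclideanSpace ℝ (Fin d) →L[ℝ] EuclideanSpace ℝ (Fin m) :=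
    LinearMap.toContinuousLinearMap A with hAC
  refine ⟨‖φC‖ * β₀ * C₁ * ‖AC‖, by positivity, ?_⟩
  intro x hxP
  obtain ⟨l, hlΔ, rfl⟩ : ∃ l ∈ Δ, φ l = x := by
    rw [hPeq] at hxP
    obtain ⟨l, hl, hlx⟩ := hxP
    exact ⟨l, hl, hlx⟩
  have hHclosed : IsClosed H := by
    rw [hH]
    have e2 : {x : EuclideanSpace ℝ (Fin d) | A x = b} = AC ⁻¹' {b} := rfl
    rw [e2]
    exact IsClosed.preimage AC.continuous isClosed_singleton
  have hHne : H.Nonempty := ⟨q, hqH⟩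
  obtain ⟨h₀, hh₀H, hh₀d⟩ := hHclosed.exists_infDist_eq_dist hHne (φ l)
  have hAh₀ : A h₀ = b := by rw [hH] at hh₀H; exact hh₀H
  have hAxb : ‖A (φ l) - b‖ ≤ ‖AC‖ * Metric.infDist (φ l) H := by
    have e3 : A (φ l) - b = AC (φ l - h₀) := by
      have : AC (φ l - h₀) = A (φ l) - A h₀ := by
        simp [hAC, map_sub]
      rw [this, hAh₀]
    rw [e3, hh₀d]
    calc ‖AC (φ l - h₀)‖ ≤ ‖AC‖ * ‖φ l - h₀‖ := AC.le_opNorm _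
      _ = ‖AC‖ * dist (φ l) h₀ := by rw [dist_eq_norm]
  have hKclosed : IsClosed K := (affine_set_closed U p₀).inter (feas_closed av cv)
  obtain ⟨μ, hμK, hμd⟩ := hKclosed.exists_infDist_eq_dist hKne l
  have hφμQ : φ μ ∈ Q := by
    rw [hQ]
    have hμ := (hKchar μ).mp hμK
    constructor
    · rw [hPeq]; exact ⟨μ, hμ.1, rfl⟩
    · rw [hH]; exact hμ.2
  have step1 : Metric.infDist (φ l) Q ≤ ‖φC‖ * Metric.infDist l K := by
    calc Metric.infDist (φ l) Q ≤ dist (φ l) (φ μ) := Metric.infDist_le_dist_of_mem hφμQ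
      _ = ‖φC (l - μ)‖ := by
          rw [dist_eq_norm]
          congr 1
          simp [hφC, map_sub]
      _ ≤ ‖φC‖ * ‖l - μ‖ := φC.le_opNorm _
      _ = ‖φC‖ * Metric.infDist l K := by rw [hμd, dist_eq_norm]
  have step2 : Metric.infDist l K ≤ β₀ * Metric.infDist l Mset :=
    hβ₀ l hlΔ ((hfeasΔ l).mpr hlΔ.1)
  have step3 : Metric.infDist l Mset ≤ C₁ * ‖A (φ l) - b‖ := by
    rw [hMfib]
    have h5 := hC₁ l (b, 1) ⟨p₀, by simp [hLp₀]⟩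
    have h6 : ‖Lpair l - (b, 1)‖ = ‖A (φ l) - b‖ := by
      rw [hLpairapp, hlΔ.2]
      rw [show ((A (φ l), (1:ℝ)) - (b, 1)) = (A (φ l) - b, (0:ℝ)) by
        rw [Prod.mk_sub_mk, sub_self]]
      rw [Prod.norm_def]
      simp [max_eq_left (norm_nonneg _)]
    rw [h6] at h5
    exact h5
  calc Metric.infDist (φ l) Q ≤ ‖φC‖ * Metric.infDist l K := step1
    _ ≤ ‖φC‖ * (β₀ * Metric.infDist l Mset) :=
        mul_le_mul_of_nonneg_left step2 (norm_nonneg _)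
    _ ≤ ‖φC‖ * (β₀ * (C₁ * ‖A (φ l) - b‖)) := by
        refine mul_le_mul_of_nonneg_left (mul_le_mul_of_nonneg_left step3 hβ₀0) (norm_nonneg _)
    _ ≤ ‖φC‖ * (β₀ * (C₁ * (‖AC‖ * Metric.infDist (φ l) H))) := by
        refine mul_le_mul_of_nonneg_left
          (mul_le_mul_of_nonneg_left (mul_le_mul_of_nonneg_left hAxb hC₁0) hβ₀0) (norm_nonneg _)
    _ = ‖φC‖ * β₀ * C₁ * ‖AC‖ * Metric.infDist (φ l) H := by ring
end

section
/- Let P ⊆ ℝ^d be a polytope, A an m×d matrix, b ∈ ℝ^m, with {x ∈ P : Ax = b} nonempty, and let f : ℝ^d → ℝ be convex differentiable with ∇f bounded on P. Let x* minimize f over {x ∈ P : Ax = b}. Then there exists β ≥ 0 such that for all x ∈ P: f(x*) - f(x) ≤ β‖Ax - b‖. -/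
open RealInnerProductSpace Finset

/-- Farkas lemma, membership form, proved by a purely algebraic induction. -/
theorem farkas_mem {H : Type*} [NormedAddCommGroup H] [InnerProductSpace ℝ H]
    {ι : Type*} [DecidableEq ι] (s : Finset ι) :
    ∀ (a : ι → H) (b : H),
      (∃ μ : ι → ℝ, (∀ i ∈ s, 0 ≤ μ i) ∧ b = ∑ i ∈ s, μ i • a i) ∨
      (∃ y : H, (∀ i ∈ s, ⟪y, a i⟫ ≤ 0) ∧ 0 < ⟪y, b⟫) := by
  induction s using Finset.cons_induction with
  | empty =>
      intro a b
      by_cases hb : b = 0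
      · exact Or.inl ⟨0, by simp, by simp [hb]⟩
      · exact Or.inr ⟨b, by simp, by rw [real_inner_self_eq_norm_sq]; exact pow_pos (norm_pos_iff.mpr hb) 2⟩
  | cons j s hj ih =>
      intro a b
      rcases ih a b with ⟨μ, hμ, hrep⟩ | ⟨y, hy, hyb⟩
      · refine Or.inl ⟨Function.update μ j 0, ?_, ?_⟩
        · intro i hi
          rcases eq_or_ne i j with rfl | hij
          · simp
          · rcases Finset.mem_cons.mp hi with h | h
            · exact absurd h hij
            · simpa [Function.update_of_ne hij] using hμ i h
        · rw [Finset.sum_cons]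
          simp only [Function.update_self]
          rw [zero_smul, zero_add, hrep]
          refine Finset.sum_congr rfl fun i hi => ?_
          have hij : i ≠ j := fun h => hj (h ▸ hi)
          rw [Function.update_of_ne hij]
      · by_cases ha : ⟪y, a j⟫ ≤ 0
        · refine Or.inr ⟨y, ?_, hyb⟩
          intro i hi
          rcases Finset.mem_cons.mp hi with rfl | h
          · exact ha
          · exact hy i h
        · push_neg at ha
          have hα : ⟪y, a j⟫ ≠ 0 := ne_of_gt ha
          set α := ⟪y, a j⟫ with hαdef
          rcases ih (fun i => a i - (⟪y, a i⟫ / α) • a j) (b - (⟪y, b⟫ / α) • a j)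
            with ⟨μ, hμ, hrep⟩ | ⟨z, hz, hzb⟩
          · refine Or.inl ⟨Function.update μ j
              ((⟪y, b⟫ - ∑ i ∈ s, μ i * ⟪y, a i⟫) / α), ?_, ?_⟩
            · intro i hi
              rcases eq_or_ne i j with rfl | hij
              · simp only [Function.update_self]
                apply div_nonneg _ (le_of_lt ha)
                have hs : ∑ i ∈ s, μ i * ⟪y, a i⟫ ≤ 0 :=
                  Finset.sum_nonpos fun i hi =>
                    mul_nonpos_of_nonneg_of_nonpos (hμ i hi) (hy i hi)
                linarith [hyb]
              · rcases Finset.mem_cons.mp hi with h | h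
                · exact absurd h hij
                · simpa [Function.update_of_ne hij] using hμ i h
            · rw [Finset.sum_cons]
              simp only [Function.update_self]
              have hsum : ∀ i ∈ s, Function.update μ j
                  ((⟪y, b⟫ - ∑ i ∈ s, μ i * ⟪y, a i⟫) / α) i • a i = μ i • a i := by
                intro i hi
                have hij : i ≠ j := fun h => hj (h ▸ hi)
                rw [Function.update_of_ne hij]
              rw [Finset.sum_congr rfl hsum]
              have hb' : b = ∑ i ∈ s, μ i • (a i - (⟪y, a i⟫ / α) • a j)
                  + (⟪y, b⟫ / α) • a j := by
                rw [← hrep]; abel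
              have hexp : ∑ i ∈ s, μ i • (a i - (⟪y, a i⟫ / α) • a j)
                  = (∑ i ∈ s, μ i • a i) - (∑ i ∈ s, μ i * (⟪y, a i⟫ / α)) • a j := by
                simp only [smul_sub, smul_smul, Finset.sum_sub_distrib, Finset.sum_smul]
              have hc : (⟪y, b⟫ - ∑ i ∈ s, μ i * ⟪y, a i⟫) / α
                  = ⟪y, b⟫ / α - ∑ i ∈ s, μ i * (⟪y, a i⟫ / α) := by
                rw [sub_div, Finset.sum_div]
                congr 1
                exact Finset.sum_congr rfl fun i _ => (mul_div_assoc _ _ _)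
              rw [hc, sub_smul]
              conv_lhs => rw [hb', hexp]
              abel
          · refine Or.inr ⟨z - (⟪z, a j⟫ / α) • y, ?_, ?_⟩
            · intro i hi
              rcases Finset.mem_cons.mp hi with rfl | h
              · rw [inner_sub_left, real_inner_smul_left]
                rw [div_mul_cancel₀ _ hα]
                simp
              · have h1 := hz i h
                rw [inner_sub_right, real_inner_smul_right] at h1
                rw [inner_sub_left, real_inner_smul_left]
                have e : ⟪z, a j⟫ / α * ⟪y, a i⟫ = ⟪y, a i⟫ / α * ⟪z, a j⟫ := by ring
                linarith [h1]
            · have h1 := hzb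
              rw [inner_sub_right, real_inner_smul_right] at h1
              rw [inner_sub_left, real_inner_smul_left]
              have e : ⟪z, a j⟫ / α * ⟪y, b⟫ = ⟪y, b⟫ / α * ⟪z, a j⟫ := by ring
              linarith [h1]

/-- Farkas lemma, inequality-feasibility form. -/
theorem farkas_ineq {F : Type*} [NormedAddCommGroup F] [InnerProductSpace ℝ F]
    {ι : Type*} [DecidableEq ι] (s : Finset ι) (a : ι → F) (c : ι → ℝ)
    (h : ∀ μ : ι → ℝ, (∀ i ∈ s, 0 ≤ μ i) → (∑ i ∈ s, μ i • a i) = 0 →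
      (∑ i ∈ s, μ i * c i) ≤ 0) :
    ∃ y : F, ∀ i ∈ s, c i ≤ ⟪y, a i⟫ := by
  classical
  let T : ι → WithLp 2 (F × ℝ) := fun i => (WithLp.equiv 2 (F × ℝ)).symm (a i, c i)
  let B : WithLp 2 (F × ℝ) := (WithLp.equiv 2 (F × ℝ)).symm (0, 1)
  let L1 : WithLp 2 (F × ℝ) →ₗ[ℝ] F :=
    (LinearMap.fst ℝ F ℝ).comp (WithLp.linearEquiv 2 ℝ (F × ℝ)).toLinearMap
  let L2 : WithLp 2 (F × ℝ) →ₗ[ℝ] ℝ :=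
    (LinearMap.snd ℝ F ℝ).comp (WithLp.linearEquiv 2 ℝ (F × ℝ)).toLinearMap
  rcases farkas_mem s T B with ⟨μ, hμ, hrep⟩ | ⟨y, hy, hyB⟩
  · exfalso
    have h1 : (0 : F) = ∑ i ∈ s, μ i • a i := by
      have h := congrArg L1 hrep
      simpa [L1, T, B, map_sum, map_smul] using h
    have h2 : (1 : ℝ) = ∑ i ∈ s, μ i * c i := by
      have h := congrArg L2 hrep
      simpa [L2, T, B, map_sum, map_smul, smul_eq_mul] using h
    have := h μ hμ h1.symm
    linarith
  · have hy2 : 0 < y.snd := by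
      simpa [B, WithLp.prod_inner_apply, WithLp.toLp_fst, WithLp.toLp_snd,
        RCLike.inner_apply] using hyB
    set y1 := y.fst with hy1
    set t := y.snd with ht'
    refine ⟨(-t⁻¹) • y1, ?_⟩
    intro i hi
    have h1 := hy i hi
    have hinner : ⟪y, T i⟫ = ⟪y1, a i⟫ + t * c i := by
      show ⟪y, (WithLp.equiv 2 (F × ℝ)).symm (a i, c i)⟫ = _
      rw [WithLp.prod_inner_apply]
      simp [WithLp.toLp_fst, WithLp.toLp_snd, RCLike.inner_apply, y1, t, mul_comm]
    rw [hinner] at h1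
    have ht : 0 < t := hy2
    rw [real_inner_smul_left, neg_mul, inv_mul_eq_div, le_neg, div_le_iff₀ ht]
    linarith

theorem stmt_10 {d m : ℕ} (V : Finset (EuclideanSpace ℝ (Fin d)))
    (P : Set (EuclideanSpace ℝ (Fin d))) (hP : P = convexHull ℝ (V : Set (EuclideanSpace ℝ (Fin d))))
    (A : EuclideanSpace ℝ (Fin d) →ₗ[ℝ] EuclideanSpace ℝ (Fin m))
    (b : EuclideanSpace ℝ (Fin m))
    (hfeas : {x ∈ P | A x = b}.Nonempty)
    (f : EuclideanSpace ℝ (Fin d) → ℝ)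
    (f' : EuclideanSpace ℝ (Fin d) → EuclideanSpace ℝ (Fin d))
    (hconv : ConvexOn ℝ Set.univ f)
    (hgrad : ∀ x, HasGradientAt f (f' x) x)
    (hbdd : ∃ M : ℝ, ∀ x ∈ P, ‖f' x‖ ≤ M)
    (xstar : EuclideanSpace ℝ (Fin d)) (hxstar : xstar ∈ P ∧ A xstar = b)
    (hopt : ∀ x ∈ P, A x = b → f xstar ≤ f x) :
    ∃ β : ℝ, 0 ≤ β ∧ ∀ x ∈ P, f xstar - f x ≤ β * ‖A x - b‖ := by
  classical
  set g := f' xstar with hg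
  -- the derivative of t ↦ f (xstar + t • (x - xstar)) at 0 is ⟪g, x - xstar⟫
  have hderiv : ∀ x : EuclideanSpace ℝ (Fin d), HasDerivAt (fun t : ℝ => f (xstar + t • (x - xstar)))
      ⟪g, x - xstar⟫ 0 := by
    intro x
    have hF : HasFDerivAt f (InnerProductSpace.toDual ℝ (EuclideanSpace ℝ (Fin d)) g) xstar :=
      (hgrad xstar).hasFDerivAt
    have hc : HasDerivAt (fun t : ℝ => xstar + t • (x - xstar)) (x - xstar) 0 := by
      have h1 : HasDerivAt (fun t : ℝ => t • (x - xstar)) (x - xstar) 0 := by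
        simpa using (hasDerivAt_id (0:ℝ)).smul_const (x - xstar)
      simpa using h1.const_add xstar
    have hF' : HasFDerivAt f (InnerProductSpace.toDual ℝ (EuclideanSpace ℝ (Fin d)) g)
        ((fun t : ℝ => xstar + t • (x - xstar)) 0) := by simpa using hF
    have := hF'.comp_hasDerivAt 0 hc
    simp only [InnerProductSpace.toDual_apply_apply] at this
    exact this
  -- gradient inequality at xstar: f xstar - f x ≤ ⟪g, xstar - x⟫
  have hgradineq : ∀ x : EuclideanSpace ℝ (Fin d), f xstar - f x ≤ ⟪g, xstar - x⟫ := by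
    intro x
    have hd := hderiv x
    have hslope : Filter.Tendsto (slope (fun t : ℝ => f (xstar + t • (x - xstar))) 0)
        (nhdsWithin 0 (Set.Ioi 0)) (nhds ⟪g, x - xstar⟫) :=
      ((hasDerivAt_iff_tendsto_slope.mp hd).mono_left
        (nhdsWithin_mono _ (fun t ht => ne_of_gt ht)))
    have hub : ∀ t ∈ Set.Ioo (0:ℝ) 1,
        slope (fun t : ℝ => f (xstar + t • (x - xstar))) 0 t ≤ f x - f xstar := by
      intro t ht
      have hcomb : xstar + t • (x - xstar) = (1 - t) • xstar + t • x := by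
        rw [smul_sub, sub_smul, one_smul]; abel
      have hcv := hconv.2 (Set.mem_univ xstar) (Set.mem_univ x)
        (by linarith [ht.2] : (0:ℝ) ≤ 1 - t) (le_of_lt ht.1) (by ring)
      rw [← hcomb] at hcv
      simp only [smul_eq_mul] at hcv
      rw [slope_def_field]
      have h0 : f (xstar + (0:ℝ) • (x - xstar)) = f xstar := by simp
      rw [h0, sub_zero, div_le_iff₀ ht.1]
      nlinarith [hcv]
    have hle : ⟪g, x - xstar⟫ ≤ f x - f xstar := by
      refine le_of_tendsto hslope ?_
      filter_upwards [Ioo_mem_nhdsGT_of_mem (by constructor <;> norm_num :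
        (0:ℝ) ∈ Set.Ico (0:ℝ) 1)] with t ht using hub t ht
    have : ⟪g, xstar - x⟫ = -⟪g, x - xstar⟫ := by
      rw [← inner_neg_right, neg_sub]
    linarith [hle, this.ge, this.le]
  -- first-order optimality: feasible x gives ⟪g, xstar - x⟫ ≤ 0
  have hPc : Convex ℝ P := hP ▸ convex_convexHull ℝ _
  have hfoc : ∀ x ∈ P, A x = b → ⟪g, xstar - x⟫ ≤ 0 := by
    intro x hxP hxA
    have hd := hderiv x
    have hslope : Filter.Tendsto (slope (fun t : ℝ => f (xstar + t • (x - xstar))) 0)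
        (nhdsWithin 0 (Set.Ioi 0)) (nhds ⟪g, x - xstar⟫) :=
      ((hasDerivAt_iff_tendsto_slope.mp hd).mono_left
        (nhdsWithin_mono _ (fun t ht => ne_of_gt ht)))
    have hlb : ∀ t ∈ Set.Ioo (0:ℝ) 1,
        0 ≤ slope (fun t : ℝ => f (xstar + t • (x - xstar))) 0 t := by
      intro t ht
      have hcomb : xstar + t • (x - xstar) = (1 - t) • xstar + t • x := by
        rw [smul_sub, sub_smul, one_smul]; abel
      have hmem : xstar + t • (x - xstar) ∈ P := by
        rw [hcomb]
        exact hPc hxstar.1 hxP (by linarith [ht.2]) (le_of_lt ht.1) (by ring)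
      have hAx : A (xstar + t • (x - xstar)) = b := by
        rw [hcomb, map_add, map_smul, map_smul, hxstar.2, hxA, ← add_smul]
        simp
      have hval := hopt _ hmem hAx
      rw [slope_def_field]
      have h0 : f (xstar + (0:ℝ) • (x - xstar)) = f xstar := by simp
      rw [h0, sub_zero]
      exact div_nonneg (by linarith [hval]) (le_of_lt ht.1)
    have hge : 0 ≤ ⟪g, x - xstar⟫ := by
      refine ge_of_tendsto hslope ?_
      filter_upwards [Ioo_mem_nhdsGT_of_mem (by constructor <;> norm_num :
        (0:ℝ) ∈ Set.Ico (0:ℝ) 1)] with t ht using hlb t ht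
    have : ⟪g, xstar - x⟫ = -⟪g, x - xstar⟫ := by
      rw [← inner_neg_right, neg_sub]
    linarith [hge]
  -- Farkas: get a multiplier lam with ⟪g, xstar - v⟫ ≤ ⟪lam, A v - b⟫ for v ∈ V
  have hyp : ∀ μ : EuclideanSpace ℝ (Fin d) → ℝ, (∀ i ∈ V, 0 ≤ μ i) →
      (∑ i ∈ V, μ i • (A i - b)) = 0 → (∑ i ∈ V, μ i * ⟪g, xstar - i⟫) ≤ 0 := by
    intro μ hμ hsum
    by_cases hT : ∑ v ∈ V, μ v = 0
    · have hzero : ∀ v ∈ V, μ v = 0 := by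
        intro v hv
        have := Finset.sum_eq_zero_iff_of_nonneg hμ |>.mp hT v hv
        exact this
      rw [Finset.sum_congr rfl (fun v hv => by rw [hzero v hv, zero_mul])]
      simp
    · have hTpos : 0 < ∑ v ∈ V, μ v :=
        lt_of_le_of_ne (Finset.sum_nonneg hμ) (Ne.symm hT)
      set T := ∑ v ∈ V, μ v with hT'
      set x : EuclideanSpace ℝ (Fin d) := V.centerMass μ id with hx
      have hxP : x ∈ P := by
        rw [hP]
        exact Finset.centerMass_mem_convexHull V hμ hTpos (fun v hv => hv)
      have hxrep : x = T⁻¹ • ∑ v ∈ V, μ v • v := by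
        rw [hx, Finset.centerMass]
        simp [id]
        rfl
      have hsum2 : ∑ v ∈ V, μ v • (A v) = T • b := by
        have : ∑ v ∈ V, μ v • (A v - b) = (∑ v ∈ V, μ v • A v) - (∑ v ∈ V, μ v) • b := by
          simp only [smul_sub, Finset.sum_sub_distrib, Finset.sum_smul]
        rw [this] at hsum
        rw [sub_eq_zero] at hsum
        rw [hsum, hT']
      have hAx : A x = b := by
        rw [hxrep, map_smul, map_sum]
        have : ∀ v ∈ V, A (μ v • v) = μ v • A v := fun v _ => map_smul A _ _
        rw [Finset.sum_congr rfl this, hsum2, smul_smul, inv_mul_cancel₀ hT, one_smul]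
      have hfo := hfoc x hxP hAx
      have hexp : ⟪g, xstar - x⟫ = T⁻¹ * ∑ v ∈ V, μ v * ⟪g, xstar - v⟫ := by
        have h1 : xstar - x = T⁻¹ • ∑ v ∈ V, μ v • (xstar - v) := by
          have : ∑ v ∈ V, μ v • (xstar - v) = T • xstar - ∑ v ∈ V, μ v • v := by
            simp only [smul_sub, Finset.sum_sub_distrib, ← Finset.sum_smul, hT']
          rw [this, hxrep, smul_sub, smul_smul, inv_mul_cancel₀ hT, one_smul]
        rw [h1, real_inner_smul_right, inner_sum]
        congr 1
        exact Finset.sum_congr rfl fun v _ => real_inner_smul_right _ _ _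
      have hnn : 0 ≤ T⁻¹ := le_of_lt (inv_pos.mpr hTpos)
      nlinarith [hfo, hexp.symm.le, hexp.le, inv_pos.mpr hTpos,
        mul_pos (inv_pos.mpr hTpos) hTpos]
  obtain ⟨lam, hlam⟩ := farkas_ineq V (fun v => A v - b) (fun v => ⟪g, xstar - v⟫) hyp
  -- conclude with β = ‖lam‖
  refine ⟨‖lam‖, norm_nonneg _, ?_⟩
  intro x hxP
  obtain ⟨w, hw0, hw1, hwx⟩ := (by rwa [hP, Finset.convexHull_eq] at hxP :
    x ∈ {x : EuclideanSpace ℝ (Fin d) | ∃ w : EuclideanSpace ℝ (Fin d) → ℝ, (∀ y ∈ V, 0 ≤ w y) ∧ ∑ y ∈ V, w y = 1 ∧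
      V.centerMass w id = x})
  have hxrep : x = ∑ v ∈ V, w v • v := by
    rw [← hwx, Finset.centerMass_eq_of_sum_1 _ _ hw1]
    simp [id]
  have hstep1 : ⟪g, xstar - x⟫ ≤ ⟪lam, A x - b⟫ := by
    have h1 : xstar - x = ∑ v ∈ V, w v • (xstar - v) := by
      rw [hxrep]
      simp only [smul_sub, Finset.sum_sub_distrib, ← Finset.sum_smul, hw1, one_smul]
    have h2 : A x - b = ∑ v ∈ V, w v • (A v - b) := by
      rw [hxrep, map_sum]
      have : ∀ v ∈ V, A (w v • v) = w v • A v := fun v _ => map_smul A _ _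
      rw [Finset.sum_congr rfl this]
      simp only [smul_sub, Finset.sum_sub_distrib, ← Finset.sum_smul, hw1, one_smul]
    rw [h1, h2, inner_sum, inner_sum]
    refine Finset.sum_le_sum fun v hv => ?_
    rw [real_inner_smul_right, real_inner_smul_right]
    exact mul_le_mul_of_nonneg_left (hlam v hv) (hw0 v hv)
  calc f xstar - f x ≤ ⟪g, xstar - x⟫ := hgradineq x
    _ ≤ ⟪lam, A x - b⟫ := hstep1
    _ ≤ ‖lam‖ * ‖A x - b‖ := real_inner_le_norm _ _
end
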